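/- arXiv:1905.10965 — 7 statements merged into one kernel-verified Lean document; each statement's English description precedes it below -/
import Mathlib

section
/- For positive reals d, f and real e with 4df - e² > 0, the integral ∫_{-∞}^{∞} ln(dx² + ex + f)/(x² + 1) dx equals π·ln(d + f + √(4df − e²)). -/
open MeasureTheory Real

open Filter Topology Metric

lemma my_sqrt_add_le (u v : ℝ) (hu : 0 ≤ u) (hv : 0 ≤ v) :
    Real.sqrt (u + v) ≤ Real.sqrt u + Real.sqrt v := by
  rw [show u + v = u + v by rfl]
  have h : u + v ≤ (Real.sqrt u + Real.sqrt v) ^ 2 := by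
    have h1 := Real.sq_sqrt hu
    have h2 := Real.sq_sqrt hv
    have h3 := Real.sqrt_nonneg u
    have h4 := Real.sqrt_nonneg v
    nlinarith
  calc Real.sqrt (u + v) ≤ Real.sqrt ((Real.sqrt u + Real.sqrt v) ^ 2) := Real.sqrt_le_sqrt h
    _ = Real.sqrt u + Real.sqrt v := Real.sqrt_sq (by positivity)

lemma my_log_le (y : ℝ) (hy : 0 < y) : Real.log y ≤ 4 * Real.sqrt (Real.sqrt y) := by
  have h1 : Real.log y = 4 * Real.log (Real.sqrt (Real.sqrt y)) := by
    rw [Real.log_sqrt (Real.sqrt_nonneg y), Real.log_sqrt hy.le]; ring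
  have h2 : Real.log (Real.sqrt (Real.sqrt y)) ≤ Real.sqrt (Real.sqrt y) - 1 :=
    Real.log_le_sub_one_of_pos (by positivity)
  nlinarith [Real.sqrt_nonneg (Real.sqrt y)]

lemma my_abs_log_quad_le (a t x : ℝ) (ht : 0 < t) :
    |Real.log ((x - a) ^ 2 + t ^ 2)| ≤
      (|Real.log (t ^ 2)| + 4 * (Real.sqrt |a| + Real.sqrt t)) + 4 * Real.sqrt |x| := by
  set q := (x - a) ^ 2 + t ^ 2 with hq
  have hqpos : 0 < q := by positivity
  have hK0 : 0 ≤ 4 * Real.sqrt |x| := by positivity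
  rw [abs_le]
  constructor
  · have h1 : Real.log (t ^ 2) ≤ Real.log q :=
      Real.log_le_log (by positivity) (by nlinarith)
    have : -|Real.log (t ^ 2)| ≤ Real.log q := by
      calc -|Real.log (t ^ 2)| ≤ Real.log (t ^ 2) := neg_abs_le _
        _ ≤ Real.log q := h1
    nlinarith [Real.sqrt_nonneg |a|, Real.sqrt_nonneg t, abs_nonneg (Real.log (t^2))]
  · have h1 : Real.log q ≤ 4 * Real.sqrt (Real.sqrt q) := my_log_le q hqpos
    have h2 : Real.sqrt q ≤ |x - a| + t := by
      calc Real.sqrt q ≤ Real.sqrt ((|x - a| + t) ^ 2) := by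
            apply Real.sqrt_le_sqrt; rw [hq]; nlinarith [abs_nonneg (x - a), sq_abs (x - a)]
        _ = |x - a| + t := Real.sqrt_sq (by positivity)
    have h3 : Real.sqrt (Real.sqrt q) ≤ Real.sqrt |x| + Real.sqrt |a| + Real.sqrt t := by
      calc Real.sqrt (Real.sqrt q) ≤ Real.sqrt (|x - a| + t) := Real.sqrt_le_sqrt h2
        _ ≤ Real.sqrt |x - a| + Real.sqrt t := my_sqrt_add_le _ _ (abs_nonneg _) ht.le
        _ ≤ (Real.sqrt |x| + Real.sqrt |a|) + Real.sqrt t := by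
            have : Real.sqrt |x - a| ≤ Real.sqrt |x| + Real.sqrt |a| := by
              calc Real.sqrt |x - a| ≤ Real.sqrt (|x| + |a|) :=
                    Real.sqrt_le_sqrt (abs_sub _ _)
                _ ≤ Real.sqrt |x| + Real.sqrt |a| :=
                    my_sqrt_add_le _ _ (abs_nonneg _) (abs_nonneg _)
            linarith
        _ = Real.sqrt |x| + Real.sqrt |a| + Real.sqrt t := by ring
    nlinarith [abs_nonneg (Real.log (t ^ 2)), neg_abs_le (Real.log (t ^ 2))]

lemma my_cont_quad (a t : ℝ) (ht : 0 < t) :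
    Continuous (fun x : ℝ => Real.log ((x - a) ^ 2 + t ^ 2) / (x ^ 2 + 1)) := by
  apply Continuous.div
  · apply Continuous.log (by continuity)
    intro x; positivity
  · continuity
  · intro x; positivity

lemma my_integrable_log_quad (a t : ℝ) (ht : 0 < t) :
    Integrable (fun x : ℝ => Real.log ((x - a) ^ 2 + t ^ 2) / (x ^ 2 + 1)) := by
  set K := |Real.log (t ^ 2)| + 4 * (Real.sqrt |a| + Real.sqrt t) with hK
  have hK0 : 0 ≤ K := by positivity
  have hjap : Integrable (fun x : ℝ => (1 + ‖x‖) ^ (-(3/2 : ℝ))) := by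
    apply integrable_one_add_norm (μ := volume) (E := ℝ)
    simp
    norm_num
  apply Integrable.mono' (hjap.const_mul (4 * (K + 4)))
  · exact (my_cont_quad a t ht).aestronglyMeasurable
  · filter_upwards with x
    have hx1 : (0:ℝ) < 1 + |x| := by positivity
    have key1 : |Real.log ((x - a) ^ 2 + t ^ 2)| ≤ 2 * (K + 4) * Real.sqrt (1 + |x|) := by
      have h1 := my_abs_log_quad_le a t x ht
      have h2 : Real.sqrt |x| ≤ Real.sqrt (1 + |x|) :=
        Real.sqrt_le_sqrt (by linarith [abs_nonneg x])
      have h3 : (1:ℝ) ≤ Real.sqrt (1 + |x|) := by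
        have := Real.sqrt_le_sqrt (show (1:ℝ) ≤ 1 + |x| by linarith [abs_nonneg x])
        rwa [Real.sqrt_one] at this
      nlinarith [Real.sqrt_nonneg (1 + |x|), Real.sqrt_nonneg |x|]
    have key2 : ((x:ℝ) ^ 2 + 1)⁻¹ ≤ 2 * ((1 + |x|) ^ 2)⁻¹ := by
      rw [← one_div, show 2 * ((1 + |x|) ^ 2)⁻¹ = 2 / ((1 + |x|) ^ 2) by ring,
        div_le_div_iff₀ (by positivity) (by positivity)]
      nlinarith [abs_nonneg x, sq_abs x, sq_nonneg (|x| - 1)]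
    have hy : (1 + |x|) ^ (-(3/2 : ℝ)) = Real.sqrt (1 + |x|) * ((1 + |x|) ^ 2)⁻¹ := by
      rw [Real.sqrt_eq_rpow, ← Real.rpow_natCast (1 + |x|) 2, ← Real.rpow_neg hx1.le,
        ← Real.rpow_add hx1]
      norm_num
    have hnorm : ‖Real.log ((x - a) ^ 2 + t ^ 2) / (x ^ 2 + 1)‖
        = |Real.log ((x - a) ^ 2 + t ^ 2)| * ((x:ℝ) ^ 2 + 1)⁻¹ := by
      rw [Real.norm_eq_abs, abs_div, div_eq_mul_inv, abs_of_pos (show (0:ℝ) < x ^ 2 + 1 by positivity)]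
    rw [hnorm, Real.norm_eq_abs, hy]
    calc |Real.log ((x - a) ^ 2 + t ^ 2)| * ((x:ℝ) ^ 2 + 1)⁻¹
        ≤ (2 * (K + 4) * Real.sqrt (1 + |x|)) * (2 * ((1 + |x|) ^ 2)⁻¹) :=
          mul_le_mul key1 key2 (by positivity) (by positivity)
      _ = 4 * (K + 4) * (Real.sqrt (1 + |x|) * ((1 + |x|) ^ 2)⁻¹) := by ring

lemma my_inv_atBot : Tendsto (fun x : ℝ => x⁻¹) atBot (𝓝 0) := by
  have h1 : Tendsto (fun x : ℝ => (-x)⁻¹) atBot (𝓝 0) :=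
    tendsto_inv_atTop_zero.comp (tendsto_neg_atBot_atTop (G := ℝ))
  have h2 := h1.neg
  rw [neg_zero] at h2
  exact h2.congr (fun x => by simp [Function.comp, inv_neg])

lemma my_tendsto_aux {g : ℝ → ℝ} {c : ℝ} {l : Filter ℝ}
    (hinv : Tendsto (fun x : ℝ => x⁻¹) l (𝓝 0)) (hne : ∀ᶠ x in l, x ≠ (0:ℝ))
    {f : ℝ → ℝ} (hfg : ∀ x : ℝ, x ≠ 0 → f x = g x⁻¹) (hg : ContinuousAt g 0) (hc : g 0 = c) :
    Tendsto f l (𝓝 c) := by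
  have h1 : Tendsto (fun x : ℝ => g x⁻¹) l (𝓝 c) := by
    rw [← hc]
    exact hg.tendsto.comp hinv
  exact (tendsto_congr' (hne.mono fun x hx => hfg x hx)).mpr h1

lemma my_ratio_tendsto (a t : ℝ) (l : Filter ℝ)
    (hinv : Tendsto (fun x : ℝ => x⁻¹) l (𝓝 0)) (hne : ∀ᶠ x in l, x ≠ (0:ℝ)) :
    Tendsto (fun x : ℝ => ((x - a) ^ 2 + t ^ 2) / (x ^ 2 + 1)) l (𝓝 1) := by
  apply my_tendsto_aux hinv hne
    (g := fun u : ℝ => ((1 - a * u) ^ 2 + t ^ 2 * u ^ 2) / (1 + u ^ 2))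
  · intro x hx
    have hx2 : x ^ 2 + 1 ≠ 0 := by positivity
    field_simp
    try ring
  · apply ContinuousAt.div (by fun_prop) (by fun_prop)
    norm_num
  · norm_num

lemma my_x_div_tendsto (l : Filter ℝ)
    (hinv : Tendsto (fun x : ℝ => x⁻¹) l (𝓝 0)) (hne : ∀ᶠ x in l, x ≠ (0:ℝ)) :
    Tendsto (fun x : ℝ => x / (2 * (x ^ 2 + 1))) l (𝓝 0) := by
  apply my_tendsto_aux hinv hne (g := fun u : ℝ => u / (2 * (1 + u ^ 2)))
  · intro x hx
    have hx2 : x ^ 2 + 1 ≠ 0 := by positivity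
    field_simp
  · apply ContinuousAt.div (by fun_prop) (by fun_prop)
    norm_num
  · norm_num

lemma my_integrable_rat (a t : ℝ) (ht : 0 < t) :
    Integrable (fun x : ℝ => ((x - a) ^ 2 + t ^ 2)⁻¹ * (x ^ 2 + 1)⁻¹) := by
  apply Integrable.mono' (integrable_inv_one_add_sq.const_mul ((t ^ 2)⁻¹))
  · apply Continuous.aestronglyMeasurable
    apply Continuous.mul
    · exact (((continuous_id.sub continuous_const).pow 2).add continuous_const).inv₀
        (fun x => (by positivity : (x - a) ^ 2 + t ^ 2 ≠ 0))
    · exact ((continuous_id.pow 2).add continuous_const).inv₀ (fun x => (by positivity : x ^ 2 + 1 ≠ 0))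
  · filter_upwards with x
    have h1 : (0:ℝ) < (x - a) ^ 2 + t ^ 2 := by positivity
    have h2 : (0:ℝ) < x ^ 2 + 1 := by positivity
    rw [Real.norm_eq_abs, abs_of_pos (by positivity)]
    have k1 : ((x - a) ^ 2 + t ^ 2)⁻¹ ≤ (t ^ 2)⁻¹ := by
      apply inv_anti₀ (by positivity); nlinarith
    have k2 : (x ^ 2 + 1)⁻¹ ≤ (1 + x ^ 2)⁻¹ := by rw [add_comm]
    calc ((x - a) ^ 2 + t ^ 2)⁻¹ * (x ^ 2 + 1)⁻¹ ≤ (t ^ 2)⁻¹ * (x ^ 2 + 1)⁻¹ :=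
          mul_le_mul_of_nonneg_right k1 (by positivity)
      _ ≤ (t ^ 2)⁻¹ * (1 + x ^ 2)⁻¹ := by rw [add_comm (x^2)]

lemma my_key_rational (a t : ℝ) (ht : 0 < t) :
    (∫ x : ℝ, ((x - a) ^ 2 + t ^ 2)⁻¹ * (x ^ 2 + 1)⁻¹) =
      π * (1 + t) / (t * (a ^ 2 + (1 + t) ^ 2)) := by
  have hne_top : ∀ᶠ x : ℝ in atTop, x ≠ (0:ℝ) := eventually_ne_atTop 0
  have hne_bot : ∀ᶠ x : ℝ in atBot, x ≠ (0:ℝ) := eventually_ne_atBot 0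
  by_cases hsp : a = 0 ∧ t = 1
  · obtain ⟨ha, ht1⟩ := hsp
    subst ha ht1
    have hderiv : ∀ x : ℝ, HasDerivAt (fun x : ℝ => x / (2 * (x ^ 2 + 1)) + arctan x / 2)
        (((x - 0) ^ 2 + 1 ^ 2)⁻¹ * (x ^ 2 + 1)⁻¹) x := by
      intro x
      have hx : (0:ℝ) < x ^ 2 + 1 := by positivity
      have h1 : HasDerivAt (fun x : ℝ => 2 * (x ^ 2 + 1)) (2 * (2 * x)) x := by
        simpa using (((hasDerivAt_id x).pow 2).add_const 1).const_mul 2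
      have h2 : HasDerivAt (fun x : ℝ => x / (2 * (x ^ 2 + 1)))
          ((1 * (2 * (x ^ 2 + 1)) - x * (2 * (2 * x))) / (2 * (x ^ 2 + 1)) ^ 2) x :=
        (hasDerivAt_id x).div h1 (by positivity)
      have h3 : HasDerivAt (fun x : ℝ => arctan x / 2) (1 / (1 + x ^ 2) / 2) x :=
        (hasDerivAt_arctan x).div_const 2
      refine (h2.add h3).congr_deriv ?_
      symm
      have h4 : 1 + x ^ 2 ≠ 0 := by positivity
      field_simp
      ring
    have hint := my_integrable_rat 0 1 one_pos
    have htop : Tendsto (fun x : ℝ => x / (2 * (x ^ 2 + 1)) + arctan x / 2) atTop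
        (𝓝 (0 + (π / 2) / 2)) := by
      refine Tendsto.add (my_x_div_tendsto atTop tendsto_inv_atTop_zero hne_top) ?_
      exact ((tendsto_nhds_of_tendsto_nhdsWithin tendsto_arctan_atTop)).div_const 2
    have hbot : Tendsto (fun x : ℝ => x / (2 * (x ^ 2 + 1)) + arctan x / 2) atBot
        (𝓝 (0 + (-(π / 2)) / 2)) := by
      refine Tendsto.add (my_x_div_tendsto atBot my_inv_atBot hne_bot) ?_
      exact ((tendsto_nhds_of_tendsto_nhdsWithin tendsto_arctan_atBot)).div_const 2
    rw [integral_of_hasDerivAt_of_tendsto hderiv hint hbot htop]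
    ring
  · -- general case
    have hpos1 : (0:ℝ) < a ^ 2 + (1 + t) ^ 2 := by positivity
    have hpos2 : (0:ℝ) < a ^ 2 + (1 - t) ^ 2 := by
      rcases eq_or_ne a 0 with ha | ha
      · have ht1 : t ≠ 1 := fun h => hsp ⟨ha, h⟩
        have h0 : 1 - t ≠ 0 := sub_ne_zero.mpr fun h => ht1 h.symm
        have h2 : 0 < (1 - t) ^ 2 := lt_of_le_of_ne (sq_nonneg _) (Ne.symm (pow_ne_zero 2 h0))
        nlinarith [sq_nonneg a]
      · positivity
    set Δ : ℝ := (a ^ 2 + (1 + t) ^ 2) * (a ^ 2 + (1 - t) ^ 2) with hΔdef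
    have hΔ : (0:ℝ) < Δ := mul_pos hpos1 hpos2
    set α : ℝ := -2 * a / Δ with hα
    set δ : ℝ := (a ^ 2 + t ^ 2 - 1) / Δ with hδ
    set c₁ : ℝ := (a ^ 2 + 1 - t ^ 2) / (t * Δ) with hc₁
    set F : ℝ → ℝ := fun x => α / 2 * (Real.log ((x - a) ^ 2 + t ^ 2) - Real.log (x ^ 2 + 1)) +
      (c₁ * arctan ((x - a) / t) + δ * arctan x) with hF
    have hderiv : ∀ x : ℝ, HasDerivAt F (((x - a) ^ 2 + t ^ 2)⁻¹ * (x ^ 2 + 1)⁻¹) x := by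
      intro x
      have hD1 : (0:ℝ) < (x - a) ^ 2 + t ^ 2 := by positivity
      have hD2 : (0:ℝ) < x ^ 2 + 1 := by positivity
      have h1 : HasDerivAt (fun x : ℝ => (x - a) ^ 2 + t ^ 2) (2 * (x - a)) x := by
        simpa using (((hasDerivAt_id x).sub_const a).pow 2).add_const (t ^ 2)
      have h2 : HasDerivAt (fun x : ℝ => x ^ 2 + 1) (2 * x) x := by
        simpa using ((hasDerivAt_id x).pow 2).add_const (1:ℝ)
      have hlog1 := h1.log hD1.ne'
      have hlog2 := h2.log hD2.ne'
      have harc1 : HasDerivAt (fun x : ℝ => arctan ((x - a) / t))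
          (1 / (1 + ((x - a) / t) ^ 2) * (1 / t)) x := by
        have := (((hasDerivAt_id x).sub_const a).div_const t).arctan
        simpa using this
      have harc2 := hasDerivAt_arctan x
      have := ((hlog1.sub hlog2).const_mul (α / 2)).add
        ((harc1.const_mul c₁).add (harc2.const_mul δ))
      refine this.congr_deriv ?_
      symm
      have h3 : 1 + ((x - a) / t) ^ 2 ≠ 0 := by positivity
      have h4 : (1:ℝ) + x ^ 2 ≠ 0 := by positivity
      rw [hα, hδ, hc₁, hΔdef]
      field_simp
      ring
    have hint := my_integrable_rat a t ht
    have hlog_top : Tendsto (fun x : ℝ =>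
        Real.log ((x - a) ^ 2 + t ^ 2) - Real.log (x ^ 2 + 1)) atTop (𝓝 0) := by
      have heq : (fun x : ℝ => Real.log ((x - a) ^ 2 + t ^ 2) - Real.log (x ^ 2 + 1)) =
          fun x : ℝ => Real.log (((x - a) ^ 2 + t ^ 2) / (x ^ 2 + 1)) := by
        funext x
        rw [Real.log_div (by positivity) (by positivity)]
      rw [heq, show (0:ℝ) = Real.log 1 by simp]
      exact (Real.continuousAt_log one_ne_zero).tendsto.comp
        (my_ratio_tendsto a t atTop tendsto_inv_atTop_zero hne_top)
    have hlog_bot : Tendsto (fun x : ℝ =>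
        Real.log ((x - a) ^ 2 + t ^ 2) - Real.log (x ^ 2 + 1)) atBot (𝓝 0) := by
      have heq : (fun x : ℝ => Real.log ((x - a) ^ 2 + t ^ 2) - Real.log (x ^ 2 + 1)) =
          fun x : ℝ => Real.log (((x - a) ^ 2 + t ^ 2) / (x ^ 2 + 1)) := by
        funext x
        rw [Real.log_div (by positivity) (by positivity)]
      rw [heq, show (0:ℝ) = Real.log 1 by simp]
      exact (Real.continuousAt_log one_ne_zero).tendsto.comp
        (my_ratio_tendsto a t atBot my_inv_atBot hne_bot)
    have harct_top : Tendsto (fun x : ℝ => arctan ((x - a) / t)) atTop (𝓝 (π / 2)) := by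
      have hlin : Tendsto (fun x : ℝ => (x - a) / t) atTop atTop := by
        apply Tendsto.atTop_div_const ht
        simpa [sub_eq_add_neg] using tendsto_atTop_add_const_right atTop (-a) tendsto_id
      exact (tendsto_nhds_of_tendsto_nhdsWithin tendsto_arctan_atTop).comp hlin
    have harct_bot : Tendsto (fun x : ℝ => arctan ((x - a) / t)) atBot (𝓝 (-(π / 2))) := by
      have hlin : Tendsto (fun x : ℝ => (x - a) / t) atBot atBot := by
        apply Tendsto.atBot_div_const ht
        simpa [sub_eq_add_neg] using tendsto_atBot_add_const_right atBot (-a) tendsto_id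
      exact (tendsto_nhds_of_tendsto_nhdsWithin tendsto_arctan_atBot).comp hlin
    have htop : Tendsto F atTop (𝓝 (α / 2 * 0 + (c₁ * (π / 2) + δ * (π / 2)))) :=
      (hlog_top.const_mul (α / 2)).add ((harct_top.const_mul c₁).add
        (((tendsto_nhds_of_tendsto_nhdsWithin tendsto_arctan_atTop)).const_mul δ))
    have hbot : Tendsto F atBot (𝓝 (α / 2 * 0 + (c₁ * (-(π / 2)) + δ * (-(π / 2))))) :=
      (hlog_bot.const_mul (α / 2)).add ((harct_bot.const_mul c₁).add
        (((tendsto_nhds_of_tendsto_nhdsWithin tendsto_arctan_atBot)).const_mul δ))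
    rw [integral_of_hasDerivAt_of_tendsto hderiv hint hbot htop]
    rw [hc₁, hδ, hΔdef]
    field_simp
    ring

lemma my_G_hasDeriv (a b₀ : ℝ) (hb : 0 < b₀) :
    HasDerivAt (fun b : ℝ => ∫ x : ℝ, Real.log ((x - a) ^ 2 + b ^ 2) / (x ^ 2 + 1))
      (π * (2 * (1 + b₀)) / (a ^ 2 + (1 + b₀) ^ 2)) b₀ := by
  set F : ℝ → ℝ → ℝ := fun b x => Real.log ((x - a) ^ 2 + b ^ 2) / (x ^ 2 + 1) with hFdef
  set F' : ℝ → ℝ → ℝ := fun b x => (2 * b) * (((x - a) ^ 2 + b ^ 2)⁻¹ * (x ^ 2 + 1)⁻¹) with hF'def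
  have hball : ∀ b ∈ ball b₀ (b₀ / 2), b₀ / 2 < b ∧ b < 3 * b₀ / 2 := by
    intro b hb'
    rw [mem_ball, Real.dist_eq, abs_lt] at hb'
    constructor <;> linarith [hb'.1, hb'.2]
  have key := hasDerivAt_integral_of_dominated_loc_of_deriv_le (F := F) (F' := F')
    (x₀ := b₀) (s := ball b₀ (b₀ / 2)) (bound := fun x => (12 / b₀) * (x ^ 2 + 1)⁻¹)
    (μ := volume) (Metric.ball_mem_nhds b₀ (by positivity))
    ?_ (my_integrable_log_quad a b₀ hb) ?_ ?_ ?_ ?_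
  · have hval : (∫ x : ℝ, F' b₀ x) = π * (2 * (1 + b₀)) / (a ^ 2 + (1 + b₀) ^ 2) := by
      rw [hF'def]
      simp only
      rw [MeasureTheory.integral_const_mul, my_key_rational a b₀ hb]
      field_simp
    rw [← hval]
    exact key.2
  · filter_upwards [Metric.ball_mem_nhds b₀ (by positivity : (0:ℝ) < b₀ / 2)] with b hb'
    have hbpos : 0 < b := by linarith [(hball b hb').1, hb]
    exact (my_cont_quad a b hbpos).aestronglyMeasurable
  · apply Continuous.aestronglyMeasurable
    apply continuous_const.mul
    apply Continuous.mul
    · exact ((((continuous_id.sub continuous_const).pow 2).add continuous_const).inv₀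
        (fun x => (by positivity : (x - a) ^ 2 + b₀ ^ 2 ≠ 0)))
    · exact ((continuous_id.pow 2).add continuous_const).inv₀ (fun x => (by positivity : x ^ 2 + 1 ≠ 0))
  · filter_upwards with x
    intro b hb'
    obtain ⟨h1, h2⟩ := hball b hb'
    have hbpos : 0 < b := by linarith
    have hD1 : b ^ 2 ≤ (x - a) ^ 2 + b ^ 2 := by nlinarith [sq_nonneg (x - a)]
    have hD1pos : (0:ℝ) < (x - a) ^ 2 + b ^ 2 := by positivity
    have hD2pos : (0:ℝ) < x ^ 2 + 1 := by positivity
    rw [hF'def]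
    simp only
    rw [Real.norm_eq_abs, abs_of_nonneg (by positivity)]
    have k1 : ((x - a) ^ 2 + b ^ 2)⁻¹ ≤ (b ^ 2)⁻¹ := inv_anti₀ (by positivity) hD1
    have k2 : (b ^ 2)⁻¹ ≤ ((b₀ / 2) ^ 2)⁻¹ := by
      apply inv_anti₀ (by positivity)
      nlinarith
    calc (2 * b) * (((x - a) ^ 2 + b ^ 2)⁻¹ * (x ^ 2 + 1)⁻¹)
        ≤ (2 * (3 * b₀ / 2)) * (((b₀ / 2) ^ 2)⁻¹ * (x ^ 2 + 1)⁻¹) := by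
          apply mul_le_mul (by linarith) ?_ (by positivity) (by positivity)
          exact mul_le_mul (k1.trans k2) le_rfl (by positivity) (by positivity)
      _ = (12 / b₀) * (x ^ 2 + 1)⁻¹ := by field_simp; ring
  · exact (integrable_inv_one_add_sq.const_mul _).mono'
      ((continuous_const.mul (((continuous_id.pow 2).add continuous_const).inv₀
        (fun x : ℝ => (by positivity : x ^ 2 + 1 ≠ 0)))).aestronglyMeasurable)
      (by
        filter_upwards with x
        rw [Real.norm_eq_abs, abs_of_nonneg (by positivity)]
        rw [add_comm (x ^ 2)])
  · filter_upwards with x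
    intro b hb'
    obtain ⟨h1, h2⟩ := hball b hb'
    have hbpos : 0 < b := by linarith
    have hD1pos : (0:ℝ) < (x - a) ^ 2 + b ^ 2 := by positivity
    have harg : HasDerivAt (fun b : ℝ => (x - a) ^ 2 + b ^ 2) (2 * b) b := by
      simpa using ((hasDerivAt_id b).pow 2).const_add ((x - a) ^ 2)
    have hlog := harg.log hD1pos.ne'
    have := hlog.div_const (x ^ 2 + 1)
    refine this.congr_deriv ?_
    symm
    rw [hF'def]
    simp only
    have hD2 : (x:ℝ) ^ 2 + 1 ≠ 0 := by positivity
    field_simp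

lemma my_int_inv : Integrable (fun x : ℝ => ((x:ℝ) ^ 2 + 1)⁻¹) := by
  have h := integrable_inv_one_add_sq
  apply h.congr
  filter_upwards with x
  rw [add_comm]

lemma my_integral_inv : (∫ x : ℝ, ((x:ℝ) ^ 2 + 1)⁻¹) = π := by
  rw [← integral_univ_inv_one_add_sq]
  congr 1
  funext x
  rw [add_comm]

lemma my_phi_deriv (a b : ℝ) (hb : 0 < b) :
    HasDerivAt (fun b : ℝ =>
      (∫ x : ℝ, Real.log ((x - a) ^ 2 + b ^ 2) / (x ^ 2 + 1)) -
        π * Real.log (a ^ 2 + (1 + b) ^ 2)) 0 b := by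
  have hpos : (0:ℝ) < a ^ 2 + (1 + b) ^ 2 := by positivity
  have harg : HasDerivAt (fun b : ℝ => a ^ 2 + (1 + b) ^ 2) (2 * (1 + b)) b := by
    simpa using (((hasDerivAt_id b).const_add (1:ℝ)).pow 2).const_add (a ^ 2)
  have hH : HasDerivAt (fun b : ℝ => π * Real.log (a ^ 2 + (1 + b) ^ 2))
      (π * (2 * (1 + b)) / (a ^ 2 + (1 + b) ^ 2)) b := by
    have := (harg.log hpos.ne').const_mul π
    refine this.congr_deriv ?_
    ring
  have := (my_G_hasDeriv a b hb).sub hH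
  refine this.congr_deriv ?_
  ring

lemma my_decomp (a B : ℝ) (hB : 0 < B) :
    (∫ x : ℝ, Real.log ((x - a) ^ 2 + B ^ 2) / (x ^ 2 + 1)) =
      (∫ x : ℝ, (Real.log ((x - a) ^ 2 + B ^ 2) - Real.log (B ^ 2)) / (x ^ 2 + 1)) +
        Real.log (B ^ 2) * π := by
  have hint1 := my_integrable_log_quad a B hB
  have hint2 : Integrable (fun x : ℝ => Real.log (B ^ 2) * ((x:ℝ) ^ 2 + 1)⁻¹) :=
    my_int_inv.const_mul _
  have heq : (fun x : ℝ => (Real.log ((x - a) ^ 2 + B ^ 2) - Real.log (B ^ 2)) / (x ^ 2 + 1)) =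
      fun x : ℝ => Real.log ((x - a) ^ 2 + B ^ 2) / (x ^ 2 + 1) -
        Real.log (B ^ 2) * ((x:ℝ) ^ 2 + 1)⁻¹ := by
    funext x
    have : ((x:ℝ) ^ 2 + 1) ≠ 0 := by positivity
    field_simp
  rw [heq, integral_sub hint1 hint2, MeasureTheory.integral_const_mul, my_integral_inv]
  ring

lemma my_psi_tendsto (a : ℝ) :
    Tendsto (fun B : ℝ =>
        ∫ x : ℝ, (Real.log ((x - a) ^ 2 + B ^ 2) - Real.log (B ^ 2)) / (x ^ 2 + 1))
      atTop (𝓝 0) := by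
  have h0 : (0:ℝ) = ∫ x : ℝ, (0:ℝ) := by simp
  rw [h0]
  apply tendsto_integral_filter_of_dominated_convergence
    (bound := fun x : ℝ => Real.log ((x - a) ^ 2 + 1 ^ 2) / (x ^ 2 + 1))
  · filter_upwards [eventually_gt_atTop (0:ℝ)] with B hB
    apply Continuous.aestronglyMeasurable
    apply Continuous.div ?_ (by continuity) (fun x => by positivity)
    exact (Continuous.log (by continuity) (fun x => by positivity)).sub continuous_const
  · filter_upwards [eventually_ge_atTop (1:ℝ)] with B hB
    filter_upwards with x
    have hBpos : (0:ℝ) < B := by linarith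
    have hD1 : (0:ℝ) < (x - a) ^ 2 + B ^ 2 := by positivity
    have hD2 : (0:ℝ) < x ^ 2 + 1 := by positivity
    have hge : Real.log (B ^ 2) ≤ Real.log ((x - a) ^ 2 + B ^ 2) :=
      Real.log_le_log (by positivity) (by nlinarith [sq_nonneg (x - a)])
    have hle : Real.log ((x - a) ^ 2 + B ^ 2) - Real.log (B ^ 2) ≤
        Real.log ((x - a) ^ 2 + 1) := by
      rw [← Real.log_div hD1.ne' (by positivity)]
      apply Real.log_le_log (by positivity)
      rw [div_le_iff₀ (by positivity)]
      have hB2 : (1:ℝ) ≤ B ^ 2 := by nlinarith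
      nlinarith [sq_nonneg (x - a), mul_le_mul_of_nonneg_left hB2 (sq_nonneg (x - a))]
    rw [Real.norm_eq_abs, abs_div, abs_of_pos hD2, abs_of_nonneg (by linarith)]
    rw [one_pow]
    gcongr
  · exact my_integrable_log_quad a 1 one_pos
  · filter_upwards with x
    apply my_tendsto_aux tendsto_inv_atTop_zero (eventually_ne_atTop 0)
      (g := fun u : ℝ => Real.log (((x - a) * u) ^ 2 + 1) / (x ^ 2 + 1))
    · intro B hB0
      have hB2 : (B:ℝ) ^ 2 ≠ 0 := pow_ne_zero 2 hB0
      have hD1 : (0:ℝ) < (x - a) ^ 2 + B ^ 2 := by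
        have : (B:ℝ) ^ 2 > 0 := lt_of_le_of_ne (sq_nonneg B) (Ne.symm hB2)
        nlinarith [sq_nonneg (x - a)]
      rw [← Real.log_div hD1.ne' hB2]
      have harg : ((x - a) * B⁻¹) ^ 2 + 1 = ((x - a) ^ 2 + B ^ 2) / B ^ 2 := by
        field_simp
      rw [harg]
    · apply ContinuousAt.div_const
      apply ContinuousAt.log (by fun_prop)
      norm_num
    · norm_num

lemma my_ratio2_tendsto (a : ℝ) :
    Tendsto (fun B : ℝ => π * Real.log ((a ^ 2 + (1 + B) ^ 2) / B ^ 2)) atTop (𝓝 0) := by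
  have h : Tendsto (fun B : ℝ => (a ^ 2 + (1 + B) ^ 2) / B ^ 2) atTop (𝓝 1) := by
    apply my_tendsto_aux tendsto_inv_atTop_zero (eventually_ne_atTop 0)
      (g := fun u : ℝ => (a * u) ^ 2 + (u + 1) ^ 2)
    · intro B hB0
      field_simp
    · fun_prop
    · norm_num
  have h2 : Tendsto (fun B : ℝ => Real.log ((a ^ 2 + (1 + B) ^ 2) / B ^ 2)) atTop (𝓝 0) := by
    rw [show (0:ℝ) = Real.log 1 by simp]
    exact (Real.continuousAt_log one_ne_zero).tendsto.comp h
  have h3 := h2.const_mul π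
  rw [mul_zero] at h3
  exact h3

lemma my_phi_tendsto (a : ℝ) :
    Tendsto (fun B : ℝ => (∫ x : ℝ, Real.log ((x - a) ^ 2 + B ^ 2) / (x ^ 2 + 1)) -
      π * Real.log (a ^ 2 + (1 + B) ^ 2)) atTop (𝓝 0) := by
  have h := (my_psi_tendsto a).sub (my_ratio2_tendsto a)
  rw [sub_zero] at h
  apply (tendsto_congr' ?_).mpr h
  filter_upwards [eventually_gt_atTop (0:ℝ)] with B hB
  have h1 := my_decomp a B hB
  rw [Real.log_div (by positivity) (by positivity)]
  rw [h1]
  ring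

lemma my_log_quad_integral (a b : ℝ) (hb : 0 < b) :
    (∫ x : ℝ, Real.log ((x - a) ^ 2 + b ^ 2) / (x ^ 2 + 1)) =
      π * Real.log (a ^ 2 + (1 + b) ^ 2) := by
  set φ : ℝ → ℝ := fun B => (∫ x : ℝ, Real.log ((x - a) ^ 2 + B ^ 2) / (x ^ 2 + 1)) -
    π * Real.log (a ^ 2 + (1 + B) ^ 2) with hφ
  have hconst : ∀ B, b ≤ B → φ B = φ b := by
    intro B hB
    have := constant_of_has_deriv_right_zero (f := φ) (a := b) (b := B)
      (fun y hy => ((my_phi_deriv a y (lt_of_lt_of_le hb hy.1)).continuousAt).continuousWithinAt)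
      (fun y hy => (my_phi_deriv a y (lt_of_lt_of_le hb hy.1)).hasDerivWithinAt)
    exact this B (Set.right_mem_Icc.mpr hB)
  have hzero : φ b = 0 := by
    have h1 : Tendsto (fun _ : ℝ => φ b) atTop (𝓝 0) := by
      apply (tendsto_congr' ?_).mp (my_phi_tendsto a)
      filter_upwards [eventually_ge_atTop b] with B hB
      exact hconst B hB
    exact tendsto_nhds_unique tendsto_const_nhds h1
  have := sub_eq_zero.mp hzero
  exact this

theorem stmt_0 (d e f : ℝ) (hd : 0 < d) (hf : 0 < f) (h : 0 < 4 * d * f - e ^ 2) :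
    ∫ x : ℝ, Real.log (d * x ^ 2 + e * x + f) / (x ^ 2 + 1) =
      π * Real.log (d + f + Real.sqrt (4 * d * f - e ^ 2)) := by
  set r : ℝ := Real.sqrt (4 * d * f - e ^ 2) with hrdef
  have hr2 : r ^ 2 = 4 * d * f - e ^ 2 := Real.sq_sqrt h.le
  have hr0 : 0 < r := Real.sqrt_pos.mpr h
  set a : ℝ := -e / (2 * d) with hadef
  set t : ℝ := r / (2 * d) with htdef
  have ht : 0 < t := by positivity
  have hquad : ∀ x : ℝ, d * x ^ 2 + e * x + f = d * ((x - a) ^ 2 + t ^ 2) := by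
    intro x
    rw [hadef, htdef]
    field_simp
    nlinarith [hr2]
  have hpos : ∀ x : ℝ, (0:ℝ) < (x - a) ^ 2 + t ^ 2 := fun x => by positivity
  have hfe : (fun x : ℝ => Real.log (d * x ^ 2 + e * x + f) / (x ^ 2 + 1)) =
      fun x : ℝ => Real.log d * ((x:ℝ) ^ 2 + 1)⁻¹ + Real.log ((x - a) ^ 2 + t ^ 2) / (x ^ 2 + 1) := by
    funext x
    rw [hquad x, Real.log_mul hd.ne' (hpos x).ne']
    have : ((x:ℝ) ^ 2 + 1) ≠ 0 := by positivity
    field_simp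
  rw [hfe, integral_add (my_int_inv.const_mul _) (my_integrable_log_quad a t ht),
    MeasureTheory.integral_const_mul, my_integral_inv, my_log_quad_integral a t ht]
  have hpos2 : (0:ℝ) < a ^ 2 + (1 + t) ^ 2 := by positivity
  have key : d * (a ^ 2 + (1 + t) ^ 2) = d + f + r := by
    rw [hadef, htdef]
    field_simp
    nlinarith [hr2]
  have hsum : Real.log d + Real.log (a ^ 2 + (1 + t) ^ 2) = Real.log (d + f + r) := by
    rw [← Real.log_mul hd.ne' hpos2.ne', key]
  calc Real.log d * π + π * Real.log (a ^ 2 + (1 + t) ^ 2)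
      = π * (Real.log d + Real.log (a ^ 2 + (1 + t) ^ 2)) := by ring
    _ = π * Real.log (d + f + r) := by rw [hsum]
end

section
/- For reals a > 0, z > 0, and b ∈ (−1, 1], the integral ∫_{−∞}^{∞} ln(a² − 2abx + x²)/(x² + z²) dx equals (π/z)·ln(z² + 2az√(1−b²) + a²). -/
open MeasureTheory Real Filter Set Topology

-- ratio tendsto lemma
lemma ratio_tendsto_atTop (A B C D : ℝ) :
    Tendsto (fun s : ℝ => (s^2 + A*s + B)/(s^2 + C*s + D)) atTop (𝓝 1) := by
  have hi : Tendsto (fun s : ℝ => s⁻¹) atTop (𝓝 0) := tendsto_inv_atTop_zero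
  have num : Tendsto (fun s : ℝ => 1 + A*s⁻¹ + B*(s⁻¹*s⁻¹)) atTop (𝓝 (1 + A*0 + B*(0*0))) :=
    (tendsto_const_nhds.add (hi.const_mul A)).add ((hi.mul hi).const_mul B)
  have den : Tendsto (fun s : ℝ => 1 + C*s⁻¹ + D*(s⁻¹*s⁻¹)) atTop (𝓝 (1 + C*0 + D*(0*0))) :=
    (tendsto_const_nhds.add (hi.const_mul C)).add ((hi.mul hi).const_mul D)
  have h := num.div den (by norm_num)
  have h' : Tendsto (fun s : ℝ => (1 + A*s⁻¹ + B*(s⁻¹*s⁻¹))/(1 + C*s⁻¹ + D*(s⁻¹*s⁻¹)))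
      atTop (𝓝 1) := by simp at h; exact h
  refine h'.congr' ?_
  filter_upwards [eventually_ne_atTop (0:ℝ)] with s hs
  have h2 : s⁻¹ * s⁻¹ ≠ 0 := by positivity
  have e1 : 1 + A*s⁻¹ + B*(s⁻¹*s⁻¹) = (s^2 + A*s + B) * (s⁻¹*s⁻¹) := by
    field_simp
  have e2 : 1 + C*s⁻¹ + D*(s⁻¹*s⁻¹) = (s^2 + C*s + D) * (s⁻¹*s⁻¹) := by
    field_simp
  rw [e1, e2, mul_div_mul_right _ _ h2]

lemma ratio_tendsto_atBot (A B C D : ℝ) :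
    Tendsto (fun s : ℝ => (s^2 + A*s + B)/(s^2 + C*s + D)) atBot (𝓝 1) := by
  have h := (ratio_tendsto_atTop (-A) B (-C) D).comp tendsto_neg_atBot_atTop
  refine h.congr fun s => ?_
  simp only [Function.comp_apply]
  ring_nf

lemma sq_add_sq_pos' {z : ℝ} (hz : 0 < z) (x : ℝ) : 0 < x^2 + z^2 := by positivity

lemma integrable_inv_sq_add_sq {z : ℝ} (hz : 0 < z) :
    Integrable (fun x : ℝ => (x^2 + z^2)⁻¹) := by
  have h := (integrable_inv_one_add_sq).const_mul (1 + 1/z^2)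
  refine h.mono' ?_ ?_
  · refine (Continuous.aestronglyMeasurable ?_)
    exact (continuous_pow 2 |>.add continuous_const).inv₀ (fun x => (sq_add_sq_pos' hz x).ne')
  · filter_upwards with x
    have h1 : (0:ℝ) < x^2 + z^2 := by positivity
    have h2 : (0:ℝ) < 1 + x^2 := by positivity
    have hz2 : (0:ℝ) < z^2 := by positivity
    rw [Real.norm_eq_abs, abs_of_nonneg (by positivity)]
    rw [show (1 + 1/z^2) * (1 + x^2)⁻¹ = (1+1/z^2)/(1+x^2) by field_simp,
      inv_eq_one_div, div_le_div_iff₀ h1 h2]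
    have e : ((1:ℝ)+1/z^2)*(x^2+z^2) = x^2 + z^2 + x^2/z^2 + 1 := by field_simp; ring
    rw [e]; nlinarith [sq_nonneg x, div_nonneg (sq_nonneg x) hz2.le]

lemma tendsto_arctan_comp_atTop {l : Filter ℝ} {g : ℝ → ℝ} (hg : Tendsto g l atTop) :
    Tendsto (fun x => arctan (g x)) l (𝓝 (π/2)) :=
  (tendsto_arctan_atTop.mono_right nhdsWithin_le_nhds).comp hg

lemma tendsto_arctan_comp_atBot {l : Filter ℝ} {g : ℝ → ℝ} (hg : Tendsto g l atBot) :
    Tendsto (fun x => arctan (g x)) l (𝓝 (-(π/2))) :=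
  (tendsto_arctan_atBot.mono_right nhdsWithin_le_nhds).comp hg

lemma integral_inv_quartic (p t z : ℝ) (ht : 0 < t) (hz : 0 < z)
    (hd : 0 < p^2+(z-t)^2) :
    ∫ x : ℝ, (((x-p)^2 + t^2) * (x^2 + z^2))⁻¹
      = π * (t+z) / (t*z*((t+z)^2+p^2)) := by
  have hN : (0:ℝ) < (p^2+(z+t)^2)*(p^2+(z-t)^2) := by
    have h1 : (0:ℝ) < p^2+(z+t)^2 := by positivity
    exact mul_pos h1 hd
  set N : ℝ := (p^2+(z+t)^2)*(p^2+(z-t)^2) with hNdef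
  set c1 : ℝ := (p^2+z^2-t^2)/t with hc1
  set c2 : ℝ := (p^2+t^2-z^2)/z with hc2
  set G : ℝ → ℝ := fun x => N⁻¹ * (((-p) * log ((x-p)^2+t^2) + c1 * arctan ((x-p)/t)
      + p * log (x^2+z^2)) + c2 * arctan (x/z)) with hGdef
  have hApos : ∀ x : ℝ, (0:ℝ) < (x-p)^2+t^2 := fun x => by positivity
  have hBpos : ∀ x : ℝ, (0:ℝ) < x^2+z^2 := fun x => by positivity
  -- derivative
  have hderiv : ∀ x : ℝ, HasDerivAt G ((((x-p)^2 + t^2) * (x^2 + z^2))⁻¹) x := by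
    intro x
    have hA : HasDerivAt (fun x : ℝ => (x-p)^2+t^2) (2*(x-p)) x := by
      simpa using (((hasDerivAt_id x).sub_const p).pow 2).add_const (t^2)
    have hB : HasDerivAt (fun x : ℝ => x^2+z^2) (2*x) x := by
      simpa using ((hasDerivAt_id x).pow 2).add_const (z^2)
    have hlogA : HasDerivAt (fun x : ℝ => log ((x-p)^2+t^2)) (2*(x-p)/((x-p)^2+t^2)) x :=
      hA.log (hApos x).ne'
    have hlogB : HasDerivAt (fun x : ℝ => log (x^2+z^2)) (2*x/(x^2+z^2)) x :=
      hB.log (hBpos x).ne'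
    have hiA : HasDerivAt (fun x : ℝ => (x-p)/t) (1/t) x := by
      simpa using ((hasDerivAt_id x).sub_const p).div_const t
    have harcA : HasDerivAt (fun x : ℝ => arctan ((x-p)/t)) (t/((x-p)^2+t^2)) x := by
      have := (Real.hasDerivAt_arctan ((x-p)/t)).comp x hiA
      refine this.congr_deriv ?_
      field_simp
      ring
    have hiB : HasDerivAt (fun x : ℝ => x/z) (1/z) x := by
      simpa using (hasDerivAt_id x).div_const z
    have harcB : HasDerivAt (fun x : ℝ => arctan (x/z)) (z/(x^2+z^2)) x := by
      have := (Real.hasDerivAt_arctan (x/z)).comp x hiB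
      refine this.congr_deriv ?_
      field_simp
      ring
    have hsum := ((((hlogA.const_mul (-p)).add (harcA.const_mul c1)).add
        (hlogB.const_mul p)).add (harcB.const_mul c2)).const_mul N⁻¹
    have heq : (((x-p)^2 + t^2) * (x^2 + z^2))⁻¹
        = N⁻¹ * ((((-p) * (2*(x-p)/((x-p)^2+t^2)) + c1 * (t/((x-p)^2+t^2)))
          + p * (2*x/(x^2+z^2))) + c2 * (z/(x^2+z^2))) := by
      rw [hc1, hc2, hNdef]
      have h1 := (hApos x).ne'
      have h2 := (hBpos x).ne'
      field_simp
      ring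
    rw [hGdef]
    exact heq ▸ hsum
  -- integrability
  have hint : Integrable (fun x : ℝ => (((x-p)^2 + t^2) * (x^2 + z^2))⁻¹) := by
    refine ((integrable_inv_sq_add_sq hz).const_mul (t^2)⁻¹).mono' ?_ ?_
    · refine Continuous.aestronglyMeasurable ?_
      refine Continuous.inv₀ (by continuity) (fun x => (mul_pos (hApos x) (hBpos x)).ne')
    · filter_upwards with x
      rw [Real.norm_eq_abs, abs_of_nonneg (by positivity), mul_inv]
      refine mul_le_mul_of_nonneg_right ?_ (by positivity)
      refine inv_anti₀ (by positivity) (by nlinarith [sq_nonneg (x-p)])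
  -- limits
  have hGeq : ∀ x : ℝ, G x = N⁻¹ * ((p * log ((x^2+z^2)/((x-p)^2+t^2))
      + c1 * arctan ((x-p)/t)) + c2 * arctan (x/z)) := by
    intro x
    rw [hGdef]
    rw [Real.log_div (hBpos x).ne' (hApos x).ne']
    ring
  have hratio_top : Tendsto (fun x : ℝ => (x^2+z^2)/((x-p)^2+t^2)) atTop (𝓝 1) := by
    have h := ratio_tendsto_atTop 0 (z^2) (-(2*p)) (p^2+t^2)
    refine h.congr fun s => ?_
    ring_nf
  have hratio_bot : Tendsto (fun x : ℝ => (x^2+z^2)/((x-p)^2+t^2)) atBot (𝓝 1) := by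
    have h := ratio_tendsto_atBot 0 (z^2) (-(2*p)) (p^2+t^2)
    refine h.congr fun s => ?_
    ring_nf
  have hlog_top : Tendsto (fun x : ℝ => log ((x^2+z^2)/((x-p)^2+t^2))) atTop (𝓝 0) := by
    have h := ((Real.continuousAt_log one_ne_zero).tendsto).comp hratio_top
    simpa [Function.comp_def] using h
  have hlog_bot : Tendsto (fun x : ℝ => log ((x^2+z^2)/((x-p)^2+t^2))) atBot (𝓝 0) := by
    have h := ((Real.continuousAt_log one_ne_zero).tendsto).comp hratio_bot
    simpa [Function.comp_def] using h
  have hxt_top : Tendsto (fun x : ℝ => (x-p)/t) atTop atTop := by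
    refine Tendsto.atTop_div_const ht ?_
    simpa [sub_eq_add_neg] using tendsto_atTop_add_const_right atTop (-p) tendsto_id
  have hxt_bot : Tendsto (fun x : ℝ => (x-p)/t) atBot atBot := by
    refine Tendsto.atBot_div_const ht ?_
    simpa [sub_eq_add_neg] using tendsto_atBot_add_const_right atBot (-p) tendsto_id
  have hxz_top : Tendsto (fun x : ℝ => x/z) atTop atTop :=
    Tendsto.atTop_div_const hz tendsto_id
  have hxz_bot : Tendsto (fun x : ℝ => x/z) atBot atBot :=
    Tendsto.atBot_div_const hz tendsto_id
  have htop : Tendsto G atTop (𝓝 (N⁻¹ * ((p * 0 + c1 * (π/2)) + c2 * (π/2)))) := by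
    refine Tendsto.congr (fun x => (hGeq x).symm) ?_
    exact (((hlog_top.const_mul p).add ((tendsto_arctan_comp_atTop hxt_top).const_mul c1)).add
      ((tendsto_arctan_comp_atTop hxz_top).const_mul c2)).const_mul N⁻¹
  have hbot : Tendsto G atBot (𝓝 (N⁻¹ * ((p * 0 + c1 * (-(π/2))) + c2 * (-(π/2))))) := by
    refine Tendsto.congr (fun x => (hGeq x).symm) ?_
    exact (((hlog_bot.const_mul p).add ((tendsto_arctan_comp_atBot hxt_bot).const_mul c1)).add
      ((tendsto_arctan_comp_atBot hxz_bot).const_mul c2)).const_mul N⁻¹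
  rw [MeasureTheory.integral_of_hasDerivAt_of_tendsto hderiv hint hbot htop]
  rw [hc1, hc2, hNdef]
  have h1 : ((t+z)^2+p^2) ≠ 0 := by positivity
  have h2 : (p^2+(z+t)^2) ≠ 0 := by positivity
  have h3 : (p^2+(z-t)^2) ≠ 0 := hd.ne'
  field_simp
  ring

-- |log u| ≤ 4 u^{1/4} + 4 u^{-1/4}
lemma abs_log_le_rpow {u : ℝ} (hu : 0 < u) :
    |log u| ≤ 4 * u ^ ((4:ℝ)⁻¹) + 4 * u ^ (-(4:ℝ)⁻¹) := by
  have key : ∀ v : ℝ, 0 < v → log v ≤ 4 * v ^ ((4:ℝ)⁻¹) := by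
    intro v hv
    have h1 : log (v ^ ((4:ℝ)⁻¹)) ≤ v ^ ((4:ℝ)⁻¹) - 1 :=
      log_le_sub_one_of_pos (rpow_pos_of_pos hv _)
    rw [Real.log_rpow hv] at h1
    nlinarith [rpow_pos_of_pos hv ((4:ℝ)⁻¹)]
  have h2 : 0 < u ^ ((4:ℝ)⁻¹) := rpow_pos_of_pos hu _
  have h3 : 0 < u ^ (-(4:ℝ)⁻¹) := rpow_pos_of_pos hu _
  rw [abs_le]
  constructor
  · have := key u⁻¹ (inv_pos.2 hu)
    rw [Real.log_inv, Real.inv_rpow hu.le, ← Real.rpow_neg hu.le] at this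
    nlinarith
  · nlinarith [key u hu]

lemma integrable_half_pow {z : ℝ} (hz : 0 < z) :
    Integrable (fun x : ℝ => (1+|x|) ^ ((2:ℝ)⁻¹) / (x^2+z^2)) := by
  have jb : Integrable (fun x : ℝ => (1+‖x‖) ^ (-(3/2 : ℝ))) :=
    integrable_one_add_norm (by simp; norm_num)
  refine (jb.const_mul (2 + 2/z^2)).mono' ?_ ?_
  · refine Continuous.aestronglyMeasurable (Continuous.div ?_ (by continuity)
        (fun x => by positivity))
    exact (continuous_const.add continuous_abs).rpow_const (fun x => Or.inl (by simp only [Pi.add_apply]; positivity))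
  · filter_upwards with x
    have hb : (0:ℝ) < 1 + |x| := by positivity
    have hD : (0:ℝ) < x^2+z^2 := by positivity
    rw [Real.norm_eq_abs, abs_of_nonneg (by positivity), Real.norm_eq_abs,
       Real.rpow_neg hb.le,
       show (2 + 2/z^2) * ((1+|x|) ^ (3/2:ℝ))⁻¹ = (2 + 2/z^2)/((1+|x|) ^ (3/2:ℝ)) from
         (div_eq_mul_inv _ _).symm,
       div_le_div_iff₀ hD (rpow_pos_of_pos hb _), ← Real.rpow_add hb]
    have he : ((2:ℝ)⁻¹ + 3/2) = ((2:ℕ):ℝ) := by norm_num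
    rw [he, Real.rpow_natCast]
    have h2 : (0:ℝ) < z^2 := by positivity
    have h3 : (0:ℝ) ≤ x^2/z^2 := by positivity
    have h4 : (2+2/z^2)*(x^2+z^2) = 2*x^2 + 2*z^2 + 2*(x^2/z^2) + 2 := by
      field_simp; ring
    rw [h4]
    nlinarith [sq_nonneg (|x|-1), sq_abs x, abs_nonneg x]

lemma integrable_sing_pow {z : ℝ} (p : ℝ) (hz : 0 < z) :
    Integrable (fun x : ℝ => |x - p| ^ (-(2:ℝ)⁻¹) / (x^2+z^2)) := by
  have habs : ∀ x : ℝ, |x - p| ^ (-(2:ℝ)⁻¹)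
      = (x - p) ^ (-(2:ℝ)⁻¹) + (p - x) ^ (-(2:ℝ)⁻¹) := by
    intro x
    rcases lt_trichotomy x p with h | h | h
    · have h1 : x - p < 0 := by linarith
      rw [Real.rpow_def_of_neg h1, abs_of_neg h1]
      have : Real.cos (-(2:ℝ)⁻¹ * π) = 0 := by
        rw [show (-(2:ℝ)⁻¹ * π) = -(π/2) by ring, Real.cos_neg, Real.cos_pi_div_two]
      rw [this, mul_zero, zero_add]
      norm_num
    · subst h
      norm_num
    · have h1 : p - x < 0 := by linarith
      rw [Real.rpow_def_of_neg h1, abs_of_pos (by linarith : (0:ℝ) < x - p)]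
      have : Real.cos (-(2:ℝ)⁻¹ * π) = 0 := by
        rw [show (-(2:ℝ)⁻¹ * π) = -(π/2) by ring, Real.cos_neg, Real.cos_pi_div_two]
      rw [this, mul_zero, add_zero]
  have hII : IntervalIntegrable (fun x : ℝ => |x - p| ^ (-(2:ℝ)⁻¹)) volume (p-1) (p+1) := by
    have h1 : IntervalIntegrable (fun x : ℝ => (x - p) ^ (-(2:ℝ)⁻¹)) volume (p-1) (p+1) := by
      have := (intervalIntegral.intervalIntegrable_rpow' (r := -(2:ℝ)⁻¹) (by norm_num)
        (a := -1) (b := 1)).comp_sub_right p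
      simpa [show (-1:ℝ) + p = p - 1 by ring, show (1:ℝ) + p = p + 1 by ring] using this
    have h2 : IntervalIntegrable (fun x : ℝ => (p - x) ^ (-(2:ℝ)⁻¹)) volume (p-1) (p+1) := by
      have h := (intervalIntegral.intervalIntegrable_rpow' (r := -(2:ℝ)⁻¹) (by norm_num)
        (a := -1) (b := 1)).comp_sub_left p
      have h' : IntervalIntegrable (fun x : ℝ => (p - x) ^ (-(2:ℝ)⁻¹)) volume (p+1) (p-1) := by
        simpa [show p - (-1:ℝ) = p + 1 by ring] using h
      exact h'.symm
    have he : (fun x : ℝ => |x - p| ^ (-(2:ℝ)⁻¹))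
        = fun x : ℝ => (x - p) ^ (-(2:ℝ)⁻¹) + (p - x) ^ (-(2:ℝ)⁻¹) := funext habs
    rw [he]
    exact h1.add h2
  have hIOn : IntegrableOn (fun x : ℝ => |x - p| ^ (-(2:ℝ)⁻¹) * (z^2)⁻¹)
      (Ioc (p-1) (p+1)) := by
    exact ((intervalIntegrable_iff_integrableOn_Ioc_of_le (by linarith)).1 hII).mul_const _
  have hInd := hIOn.integrable_indicator (measurableSet_Ioc)
  refine (hInd.add (integrable_inv_sq_add_sq hz)).mono' ?_ ?_
  · exact Measurable.aestronglyMeasurable (by fun_prop)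
  · filter_upwards with x
    have hD : (0:ℝ) < x^2+z^2 := by positivity
    have hnn : (0:ℝ) ≤ |x - p| ^ (-(2:ℝ)⁻¹) := rpow_nonneg (abs_nonneg _) _
    rw [Real.norm_eq_abs, abs_of_nonneg (by positivity)]
    simp only [Pi.add_apply]
    by_cases hx : x ∈ Ioc (p-1) (p+1)
    · rw [indicator_of_mem hx]
      have h1 : |x - p| ^ (-(2:ℝ)⁻¹) / (x^2+z^2) ≤ |x - p| ^ (-(2:ℝ)⁻¹) * (z^2)⁻¹ := by
        rw [div_eq_mul_inv]
        refine mul_le_mul_of_nonneg_left ?_ hnn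
        refine inv_anti₀ (by positivity) (by nlinarith [sq_nonneg x])
      have h2 : (0:ℝ) ≤ (x^2+z^2)⁻¹ := by positivity
      linarith
    · rw [indicator_of_notMem hx, zero_add]
      have h1 : (1:ℝ) ≤ |x - p| := by
        rcases not_and_or.1 hx with h | h
        · push_neg at h
          rw [abs_of_nonpos (by linarith)]; linarith
        · push_neg at h
          rw [abs_of_pos (by linarith)]; linarith
      have h2 : |x - p| ^ (-(2:ℝ)⁻¹) ≤ 1 :=
        Real.rpow_le_one_of_one_le_of_nonpos h1 (by norm_num)
      rw [div_le_iff₀ hD]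
      calc |x-p| ^ (-(2:ℝ)⁻¹) ≤ 1 := h2
        _ ≤ (x^2+z^2)⁻¹ * (x^2+z^2) := by rw [inv_mul_cancel₀ hD.ne']

lemma ae_ne_real (p : ℝ) : ∀ᵐ x : ℝ, x ≠ p := by
  rw [ae_iff]
  simpa using measure_singleton p

lemma integrable_log_quad (p c z : ℝ) (hz : 0 < z) :
    Integrable (fun x : ℝ => log ((x-p)^2 + c^2) / (x^2+z^2)) := by
  set P : ℝ := |p| + |c| with hP
  have hP0 : 0 ≤ P := by positivity
  have hbig : Integrable (fun x : ℝ =>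
      (4*((1+P) * (1+|x|) ^ ((2:ℝ)⁻¹)) + 4 * |x - p| ^ (-(2:ℝ)⁻¹)) / (x^2+z^2)) := by
    have h1 := (integrable_half_pow hz).const_mul (4*(1+P))
    have h2 := (integrable_sing_pow p hz).const_mul 4
    refine (h1.add h2).congr ?_
    filter_upwards with x
    simp only [Pi.add_apply]
    ring
  have hmeas : Measurable (fun x : ℝ => log ((x-p)^2 + c^2) / (x^2+z^2)) := by
    refine Measurable.div ?_ (by fun_prop)
    exact Real.measurable_log.comp (by fun_prop)
  refine hbig.mono' hmeas.aestronglyMeasurable ?_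
  filter_upwards [ae_ne_real p] with x hx
  have hD : (0:ℝ) < x^2+z^2 := by positivity
  have hu : (0:ℝ) < (x-p)^2 + c^2 := by
    have : x - p ≠ 0 := sub_ne_zero.2 hx
    positivity
  rw [Real.norm_eq_abs, abs_div, abs_of_pos hD, div_le_div_iff₀ hD hD]
  refine mul_le_mul_of_nonneg_right ?_ hD.le
  refine le_trans (abs_log_le_rpow hu) ?_
  have key1 : ((x-p)^2 + c^2) ^ ((4:ℝ)⁻¹) ≤ (1+P) * (1+|x|) ^ ((2:ℝ)⁻¹) := by
    have hb : (0:ℝ) < (1+P)*(1+|x|) := by positivity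
    have step : (x-p)^2 + c^2 ≤ ((1+P)*(1+|x|))^2 := by
      nlinarith [abs_nonneg x, abs_nonneg p, abs_nonneg c, sq_abs x, sq_abs p, sq_abs c,
        abs_sub x p, sq_nonneg (|x|+|p|), abs_mul_abs_self x,
        neg_abs_le x, le_abs_self x, neg_abs_le p, le_abs_self p, neg_abs_le c, le_abs_self c,
        mul_nonneg (abs_nonneg x) (abs_nonneg p), mul_nonneg (abs_nonneg x) (abs_nonneg c),
        mul_nonneg (abs_nonneg p) (abs_nonneg c), mul_nonneg hP0 (abs_nonneg x)]
    have h3 := Real.rpow_le_rpow hu.le step (by norm_num : (0:ℝ) ≤ (4:ℝ)⁻¹)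
    refine le_trans h3 ?_
    have e2 : (((1+P)*(1+|x|))^2) ^ ((4:ℝ)⁻¹) = ((1+P)*(1+|x|)) ^ ((2:ℝ)⁻¹) := by
      rw [← Real.rpow_natCast ((1+P)*(1+|x|)) 2, ← Real.rpow_mul hb.le]
      norm_num
    rw [e2, Real.mul_rpow (by positivity) (by positivity)]
    refine mul_le_mul_of_nonneg_right ?_ (by positivity)
    calc (1+P) ^ ((2:ℝ)⁻¹) ≤ (1+P) ^ (1:ℝ) :=
          Real.rpow_le_rpow_of_exponent_le (by linarith) (by norm_num)
      _ = 1 + P := Real.rpow_one _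
  have key2 : ((x-p)^2 + c^2) ^ (-(4:ℝ)⁻¹) ≤ |x - p| ^ (-(2:ℝ)⁻¹) := by
    have hxp : (0:ℝ) < (x-p)^2 := by
      have : x - p ≠ 0 := sub_ne_zero.2 hx
      positivity
    have step : (x-p)^2 ≤ (x-p)^2 + c^2 := by nlinarith [sq_nonneg c]
    have h3 := Real.rpow_le_rpow_of_nonpos hxp step (by norm_num : -(4:ℝ)⁻¹ ≤ 0)
    refine le_trans h3 ?_
    have e3 : ((x-p)^2) ^ (-(4:ℝ)⁻¹) = |x-p| ^ (-(2:ℝ)⁻¹) := by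
      rw [← sq_abs (x-p), ← Real.rpow_natCast |x-p| 2, ← Real.rpow_mul (abs_nonneg _)]
      norm_num
    rw [e3]
  nlinarith [key1, key2]

lemma step_A (p z q Q : ℝ) (hz : 0 < z) (hq : 0 ≤ q) (hqQ : q ≤ Q) :
    (∫ x : ℝ, log ((x-p)^2 + Q^2) / (x^2+z^2)) - (∫ x : ℝ, log ((x-p)^2 + q^2) / (x^2+z^2))
      = (π/z) * (log ((Q+z)^2+p^2) - log ((q+z)^2+p^2)) := by
  set f : ℝ → ℝ → ℝ := fun x t => 2*t * (((x-p)^2+t^2) * (x^2+z^2))⁻¹ with hf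
  have hBpos : ∀ x : ℝ, (0:ℝ) < x^2+z^2 := fun x => by positivity
  -- inner t-integral for x ≠ p
  have h_inner : ∀ x : ℝ, x ≠ p →
      (∫ t in Ioc q Q, f x t) = (log ((x-p)^2+Q^2) - log ((x-p)^2+q^2)) / (x^2+z^2) := by
    intro x hx
    have hxp : (0:ℝ) < (x-p)^2 := by
      have : x - p ≠ 0 := sub_ne_zero.2 hx
      positivity
    have hA : ∀ t : ℝ, (0:ℝ) < (x-p)^2+t^2 := fun t => by positivity
    rw [← intervalIntegral.integral_of_le hqQ]
    have hF : ∀ t ∈ uIcc q Q, HasDerivAt (fun t : ℝ => log ((x-p)^2+t^2) / (x^2+z^2))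
        (f x t) t := by
      intro t _
      have hin : HasDerivAt (fun t : ℝ => (x-p)^2+t^2) (2*t) t := by
        simpa using ((hasDerivAt_id t).pow 2).const_add ((x-p)^2)
      have hlog := (hin.log (hA t).ne').div_const (x^2+z^2)
      refine hlog.congr_deriv ?_
      rw [hf]
      field_simp
    have hcont : IntervalIntegrable (fun t => f x t) volume q Q := by
      refine Continuous.intervalIntegrable ?_ _ _
      refine (continuous_const.mul continuous_id).mul (Continuous.inv₀ (by continuity) ?_)
      exact fun t => (mul_pos (hA t) (hBpos x)).ne'
    rw [intervalIntegral.integral_eq_sub_of_hasDerivAt hF hcont]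
    rw [sub_div]
  -- x-integral for good t
  have h_xint : ∀ t : ℝ, 0 < t → 0 < p^2+(z-t)^2 →
      (∫ x : ℝ, f x t) = 2*π*(t+z) / (z*((t+z)^2+p^2)) := by
    intro t ht hd
    rw [hf]
    simp only
    have hpull : (∫ x : ℝ, 2*t * (((x-p)^2+t^2) * (x^2+z^2))⁻¹)
        = 2*t * ∫ x : ℝ, (((x-p)^2+t^2) * (x^2+z^2))⁻¹ := integral_const_mul _ _
    rw [hpull, integral_inv_quartic p t z ht hz hd]
    have h1 : ((t+z)^2+p^2) ≠ 0 := by positivity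
    field_simp
  -- product integrability
  have hmeas : AEStronglyMeasurable (Function.uncurry f)
      ((volume : Measure ℝ).prod ((volume : Measure ℝ).restrict (Ioc q Q))) := by
    refine Measurable.aestronglyMeasurable ?_
    refine Measurable.mul (by fun_prop) (Measurable.inv ?_)
    fun_prop
  have int_diff : Integrable (fun x : ℝ =>
      (log ((x-p)^2+Q^2) - log ((x-p)^2+q^2)) / (x^2+z^2)) := by
    refine ((integrable_log_quad p Q z hz).sub (integrable_log_quad p q z hz)).congr ?_
    filter_upwards with x
    simp only [Pi.sub_apply]
    rw [sub_div]
  have h_prod : Integrable (Function.uncurry f)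
      ((volume : Measure ℝ).prod ((volume : Measure ℝ).restrict (Ioc q Q))) := by
    rw [MeasureTheory.integrable_prod_iff hmeas]
    constructor
    · filter_upwards [ae_ne_real p] with x hx
      have hA : ∀ t : ℝ, (0:ℝ) < (x-p)^2+t^2 := fun t => by
        have : x - p ≠ 0 := sub_ne_zero.2 hx
        positivity
      refine Continuous.integrableOn_Ioc ?_
      refine (continuous_const.mul continuous_id).mul (Continuous.inv₀ (by continuity) ?_)
      exact fun t => (mul_pos (hA t) (hBpos x)).ne'
    · refine int_diff.congr ?_
      filter_upwards [ae_ne_real p] with x hx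
      have hval : (∫ t in Ioc q Q, ‖f x t‖) = ∫ t in Ioc q Q, f x t := by
        refine setIntegral_congr_ae measurableSet_Ioc ?_
        filter_upwards with t ht
        rw [Real.norm_eq_abs, abs_of_nonneg]
        refine mul_nonneg (by linarith [ht.1] : (0:ℝ) ≤ 2*t) (by positivity)
      rw [← h_inner x hx, ← hval]; rfl
  -- swap
  have hswap := MeasureTheory.integral_integral_swap h_prod
  -- outer t-integral value
  have h_outer : (∫ t in Ioc q Q, 2*π*(t+z) / (z*((t+z)^2+p^2)))
      = (π/z) * (log ((Q+z)^2+p^2) - log ((q+z)^2+p^2)) := by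
    rw [← intervalIntegral.integral_of_le hqQ]
    have hpos : ∀ t ∈ uIcc q Q, (0:ℝ) < (t+z)^2+p^2 := by
      intro t htm
      rw [uIcc_of_le hqQ] at htm
      have : 0 < t + z := by linarith [htm.1]
      positivity
    have hderiv : ∀ t ∈ uIcc q Q, HasDerivAt (fun t : ℝ => (π/z) * log ((t+z)^2+p^2))
        (2*π*(t+z) / (z*((t+z)^2+p^2))) t := by
      intro t htm
      have hin : HasDerivAt (fun t : ℝ => (t+z)^2+p^2) (2*(t+z)) t := by
        simpa using (((hasDerivAt_id t).add_const z).pow 2).add_const (p^2)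
      have hlog := (hin.log (hpos t htm).ne').const_mul (π/z)
      refine hlog.congr_deriv ?_
      field_simp
    have hcont : IntervalIntegrable (fun t : ℝ => 2*π*(t+z) / (z*((t+z)^2+p^2)))
        volume q Q := by
      refine ContinuousOn.intervalIntegrable ?_
      refine ContinuousOn.div (by fun_prop) (by fun_prop) ?_
      intro t htm
      exact mul_ne_zero hz.ne' (hpos t htm).ne'
    rw [intervalIntegral.integral_eq_sub_of_hasDerivAt hderiv hcont]
    ring
  -- assemble
  calc (∫ x : ℝ, log ((x-p)^2 + Q^2) / (x^2+z^2))
        - (∫ x : ℝ, log ((x-p)^2 + q^2) / (x^2+z^2))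
      = ∫ x : ℝ, (log ((x-p)^2+Q^2) - log ((x-p)^2+q^2)) / (x^2+z^2) := by
        rw [← integral_sub (integrable_log_quad p Q z hz) (integrable_log_quad p q z hz)]
        congr 1
        funext x
        rw [sub_div]
    _ = ∫ x : ℝ, ∫ t in Ioc q Q, f x t := by
        refine integral_congr_ae ?_
        filter_upwards [ae_ne_real p] with x hx
        exact (h_inner x hx).symm
    _ = ∫ t in Ioc q Q, ∫ x : ℝ, f x t := hswap
    _ = ∫ t in Ioc q Q, 2*π*(t+z) / (z*((t+z)^2+p^2)) := by
        refine integral_congr_ae ?_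
        have h1 : ∀ᵐ t ∂((volume : Measure ℝ).restrict (Ioc q Q)), t ≠ z :=
          ae_restrict_of_ae (ae_ne_real z)
        filter_upwards [h1, ae_restrict_mem measurableSet_Ioc] with t htz htm
        have ht : 0 < t := lt_of_le_of_lt hq htm.1
        have hd : 0 < p^2+(z-t)^2 := by
          have : z - t ≠ 0 := sub_ne_zero.2 (Ne.symm htz)
          positivity
        exact h_xint t ht hd
    _ = (π/z) * (log ((Q+z)^2+p^2) - log ((q+z)^2+p^2)) := h_outer

lemma integral_inv_sq_add_sq' {z : ℝ} (hz : 0 < z) :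
    ∫ x : ℝ, (x^2 + z^2)⁻¹ = π/z := by
  have hderiv : ∀ x : ℝ, HasDerivAt (fun x : ℝ => z⁻¹ * arctan (x/z)) ((x^2+z^2)⁻¹) x := by
    intro x
    have hiB : HasDerivAt (fun x : ℝ => x/z) (1/z) x := by
      simpa using (hasDerivAt_id x).div_const z
    have h := ((Real.hasDerivAt_arctan (x/z)).comp x hiB).const_mul z⁻¹
    refine h.congr_deriv ?_
    field_simp
    ring
  have htop : Tendsto (fun x : ℝ => z⁻¹ * arctan (x/z)) atTop (𝓝 (z⁻¹ * (π/2))) :=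
    (tendsto_arctan_comp_atTop (Tendsto.atTop_div_const hz tendsto_id)).const_mul z⁻¹
  have hbot : Tendsto (fun x : ℝ => z⁻¹ * arctan (x/z)) atBot (𝓝 (z⁻¹ * (-(π/2)))) :=
    (tendsto_arctan_comp_atBot (Tendsto.atBot_div_const hz tendsto_id)).const_mul z⁻¹
  rw [MeasureTheory.integral_of_hasDerivAt_of_tendsto hderiv (integrable_inv_sq_add_sq hz)
    hbot htop]
  field_simp
  ring

lemma abs_log_between {v w : ℝ} (h1 : 5⁻¹ ≤ v) (h2 : v ≤ 1 + w) (hw : 0 ≤ w) :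
    |log v| ≤ log 5 + log (1 + w) := by
  have hv : (0:ℝ) < v := lt_of_lt_of_le (by norm_num) h1
  have hl5 : (0:ℝ) ≤ log 5 := log_nonneg (by norm_num)
  have hlw : (0:ℝ) ≤ log (1+w) := log_nonneg (by linarith)
  rw [abs_le]
  constructor
  · have := Real.log_le_log (by norm_num : (0:ℝ) < 5⁻¹) h1
    rw [Real.log_inv] at this
    linarith
  · have := Real.log_le_log hv h2
    linarith

lemma step_B (p z : ℝ) (hz : 0 < z) :
    Tendsto (fun Q : ℝ => (∫ x : ℝ, log ((x-p)^2+Q^2)/(x^2+z^2))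
      - (π/z) * log ((Q+z)^2+p^2)) atTop (𝓝 0) := by
  have hBpos : ∀ x : ℝ, (0:ℝ) < x^2+z^2 := fun x => by positivity
  have hrep : ∀ Q : ℝ, (∫ x : ℝ, log ((x-p)^2+Q^2)/(x^2+z^2)) - (π/z) * log ((Q+z)^2+p^2)
      = ∫ x : ℝ, (log ((x-p)^2+Q^2) - log ((Q+z)^2+p^2))/(x^2+z^2) := by
    intro Q
    have h2 : (∫ x : ℝ, log ((Q+z)^2+p^2) * (x^2+z^2)⁻¹)
        = log ((Q+z)^2+p^2) * (π/z) := by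
      rw [integral_const_mul, integral_inv_sq_add_sq' hz]
    rw [mul_comm (π/z), ← h2,
      ← integral_sub (integrable_log_quad p Q z hz)
        ((integrable_inv_sq_add_sq hz).const_mul (log ((Q+z)^2+p^2)))]
    congr 1
    funext x
    rw [sub_div, div_eq_mul_inv, div_eq_mul_inv]
  have hg : Integrable (fun x : ℝ => (log ((x-p)^2+1^2) + log 5)/(x^2+z^2)) := by
    refine ((integrable_log_quad p 1 z hz).add
      ((integrable_inv_sq_add_sq hz).const_mul (log 5))).congr ?_
    filter_upwards with x
    simp only [Pi.add_apply]
    rw [add_div, div_eq_mul_inv, div_eq_mul_inv]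
  have hdct : Tendsto (fun Q : ℝ => ∫ x : ℝ,
      (log ((x-p)^2+Q^2) - log ((Q+z)^2+p^2))/(x^2+z^2)) atTop (𝓝 (∫ _ : ℝ, (0:ℝ))) := by
    refine tendsto_integral_filter_of_dominated_convergence
      (fun x => (log ((x-p)^2+1^2) + log 5)/(x^2+z^2)) ?_ ?_ hg ?_
    · filter_upwards with Q
      refine Measurable.aestronglyMeasurable (Measurable.div ?_ (by fun_prop))
      exact (Real.measurable_log.comp (by fun_prop)).sub measurable_const
    · filter_upwards [eventually_ge_atTop (1 + z + |p|)] with Q hQ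
      filter_upwards with x
      have hQ1 : (1:ℝ) ≤ Q := by
        have := abs_nonneg p; linarith
      have hQz : z ≤ Q := by
        have := abs_nonneg p; linarith
      have hQp : |p| ≤ Q := by linarith
      have hQ0 : (0:ℝ) < Q := by linarith
      have ha : (0:ℝ) < (x-p)^2 + Q^2 := by positivity
      have hb : (0:ℝ) < (Q+z)^2 + p^2 := by positivity
      have hp2 : p^2 ≤ Q^2 := by
        have := sq_abs p
        nlinarith [abs_nonneg p]
      have hv1 : 5⁻¹ ≤ ((x-p)^2+Q^2)/((Q+z)^2+p^2) := by
        rw [le_div_iff₀ hb]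
        nlinarith [sq_nonneg (x-p), hp2, mul_le_mul_of_nonneg_left hQz hz.le,
          mul_le_mul_of_nonneg_right hQz hQ0.le]
      have hv2 : ((x-p)^2+Q^2)/((Q+z)^2+p^2) ≤ 1 + (x-p)^2 := by
        rw [div_le_iff₀ hb]
        have h1 : (1:ℝ) ≤ (Q+z)^2+p^2 := by
          nlinarith [sq_nonneg p, sq_nonneg z, mul_pos hQ0 hz]
        nlinarith [mul_le_mul_of_nonneg_left h1 (sq_nonneg (x-p)), sq_nonneg p,
          mul_pos hQ0 hz, sq_nonneg z]
      have hlog := abs_log_between hv1 hv2 (sq_nonneg (x-p))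
      rw [Real.norm_eq_abs, abs_div, abs_of_pos (hBpos x),
        ← Real.log_div ha.ne' hb.ne']
      rw [div_le_div_iff₀ (hBpos x) (hBpos x)]
      refine mul_le_mul_of_nonneg_right ?_ (hBpos x).le
      calc |log (((x-p)^2+Q^2)/((Q+z)^2+p^2))| ≤ log 5 + log (1+(x-p)^2) := hlog
        _ = log ((x-p)^2+1^2) + log 5 := by rw [add_comm (log 5)]; norm_num; rw [add_comm 1]
    · filter_upwards with x
      have hratio : Tendsto (fun Q : ℝ => ((x-p)^2+Q^2)/((Q+z)^2+p^2)) atTop (𝓝 1) := by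
        have h := ratio_tendsto_atTop 0 ((x-p)^2) (2*z) (z^2+p^2)
        refine h.congr fun s => ?_
        ring_nf
      have hlog : Tendsto (fun Q : ℝ => log (((x-p)^2+Q^2)/((Q+z)^2+p^2))) atTop (𝓝 0) := by
        have h := ((Real.continuousAt_log one_ne_zero).tendsto).comp hratio
        simpa [Function.comp_def] using h
      have h := hlog.div_const (x^2+z^2)
      rw [zero_div] at h
      refine h.congr' ?_
      filter_upwards [eventually_gt_atTop (0:ℝ)] with Q hQ0
      have ha : (0:ℝ) < (x-p)^2 + Q^2 := by positivity
      have hb : (0:ℝ) < (Q+z)^2 + p^2 := by positivity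
      rw [Real.log_div ha.ne' hb.ne']
  rw [MeasureTheory.integral_zero] at hdct
  refine Tendsto.congr (fun Q => (hrep Q).symm) hdct

lemma main_integral (p q z : ℝ) (hz : 0 < z) (hq : 0 ≤ q) :
    ∫ x : ℝ, log ((x-p)^2+q^2)/(x^2+z^2) = (π/z) * log ((q+z)^2+p^2) := by
  have hconst : (fun Q : ℝ => (∫ x : ℝ, log ((x-p)^2+Q^2)/(x^2+z^2))
      - (π/z) * log ((Q+z)^2+p^2)) =ᶠ[atTop]
      (fun _ : ℝ => (∫ x : ℝ, log ((x-p)^2+q^2)/(x^2+z^2)) - (π/z) * log ((q+z)^2+p^2)) := by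
    filter_upwards [eventually_ge_atTop q] with Q hQ
    have h := step_A p z q Q hz hq hQ
    ring_nf
    ring_nf at h
    linarith
  have h0 := (step_B p z hz).congr' hconst
  have := tendsto_nhds_unique h0 tendsto_const_nhds
  linarith

theorem stmt_2 (a z b : ℝ) (ha : 0 < a) (hz : 0 < z) (hb1 : -1 < b) (hb2 : b ≤ 1) :
    ∫ x : ℝ, Real.log (a ^ 2 - 2 * a * b * x + x ^ 2) / (x ^ 2 + z ^ 2) =
      (π / z) * Real.log (z ^ 2 + 2 * a * z * Real.sqrt (1 - b ^ 2) + a ^ 2) := by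
  have hb : 0 ≤ 1 - b^2 := by nlinarith
  have hs : Real.sqrt (1 - b^2) ^ 2 = 1 - b^2 := Real.sq_sqrt hb
  have hq : 0 ≤ a * Real.sqrt (1 - b^2) := by positivity
  have h := main_integral (a*b) (a * Real.sqrt (1 - b^2)) z hz hq
  have e1 : ∀ x : ℝ, a ^ 2 - 2 * a * b * x + x ^ 2
      = (x - a*b)^2 + (a * Real.sqrt (1 - b^2))^2 := by
    intro x
    have : (a * Real.sqrt (1 - b^2))^2 = a^2 * (1 - b^2) := by
      rw [mul_pow, hs]
    rw [this]; ring
  have e2 : (a * Real.sqrt (1 - b^2) + z)^2 + (a*b)^2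
      = z ^ 2 + 2 * a * z * Real.sqrt (1 - b^2) + a ^ 2 := by
    have : (a * Real.sqrt (1 - b^2))^2 = a^2 * (1 - b^2) := by
      rw [mul_pow, hs]
    nlinarith [this]
  rw [← e2]
  rw [← h]
  congr 1
  funext x
  rw [e1 x]
end

section
/- The differential entropy of the Cauchy density p_{l,s} equals ln(4πs), i.e., −∫_{−∞}^{∞} p_{l,s}(x) ln p_{l,s}(x) dx = ln(4πs). -/
open MeasureTheory Real Set intervalIntegral

noncomputable def cauchyPdf (l s x : ℝ) : ℝ := s / (π * (s ^ 2 + (x - l) ^ 2))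

lemma intervalIntegrable_log01 : IntervalIntegrable Real.log volume 0 1 := by
  have h : IntervalIntegrable (fun x : ℝ => -Real.log x) volume 0 1 := by
    apply intervalIntegrable_deriv_of_nonneg (g := fun x : ℝ => x - x * Real.log x)
    · exact (continuous_id.sub Real.continuous_mul_log).continuousOn
    · intro x hx
      simp only [min_self, min_eq_left, max_eq_right, zero_le_one] at hx
      have := (hasDerivAt_id x).sub (Real.hasDerivAt_mul_log (ne_of_gt hx.1))
      exact this.congr_deriv (by show _ = -Real.log x; ring)
    · intro x hx
      simp only [min_eq_left, max_eq_right, zero_le_one] at hx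
      simpa using Real.log_nonpos hx.1.le hx.2.le
  have : Real.log = (-fun x : ℝ => -Real.log x) := by ext x; simp
  rw [this]; exact h.neg

lemma intervalIntegrable_log_pi2 : IntervalIntegrable Real.log volume 0 (π/2) := by
  have h1 : (1:ℝ) ≤ π/2 := by nlinarith [Real.pi_gt_three]
  refine intervalIntegrable_log01.trans (intervalIntegrable_log ?_)
  rw [Set.uIcc_of_le h1]
  intro h; exact absurd h.1 (by norm_num)

lemma logsin_intervalIntegrable :
    IntervalIntegrable (fun x => Real.log (Real.sin x)) volume 0 (π/2) := by
  rw [intervalIntegrable_iff_integrableOn_Ioc_of_le (le_of_lt Real.pi_div_two_pos)]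
  have hlog : IntegrableOn Real.log (Set.Ioc 0 (π/2)) volume := by
    have := intervalIntegrable_log_pi2
    rwa [intervalIntegrable_iff_integrableOn_Ioc_of_le (le_of_lt Real.pi_div_two_pos)] at this
  have hbound : IntegrableOn (fun x => Real.log 2 - Real.log x) (Set.Ioc 0 (π/2)) volume :=
    (integrableOn_const (by simp [Real.pi_pos.le])).sub hlog
  refine hbound.integrable.mono' ?_ ?_
  · exact (Real.measurable_log.comp Real.measurable_sin).aestronglyMeasurable
  · filter_upwards [ae_restrict_mem measurableSet_Ioc] with x hx
    have hxpos : 0 < x := hx.1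
    have hxle : x ≤ π/2 := hx.2
    have hsin : 0 < Real.sin x :=
      Real.sin_pos_of_pos_of_lt_pi hxpos (lt_of_le_of_lt hxle (by linarith [Real.pi_pos]))
    have h2 : x / 2 ≤ Real.sin x := by
      have ha : 2/π * x ≤ Real.sin x := Real.mul_le_sin hxpos.le hxle
      have hb : (1:ℝ)/2 ≤ 2/π := by
        rw [div_le_div_iff₀ two_pos Real.pi_pos]
        nlinarith [Real.pi_le_four]
      calc x/2 = (1/2)*x := by ring
        _ ≤ (2/π)*x := mul_le_mul_of_nonneg_right hb hxpos.le
        _ ≤ Real.sin x := ha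
    have hhalf : 0 < x / 2 := by linarith
    have hlog1 : Real.log (x/2) ≤ Real.log (Real.sin x) := Real.log_le_log hhalf h2
    have hlog2 : Real.log (Real.sin x) ≤ 0 := Real.log_nonpos hsin.le (Real.sin_le_one x)
    rw [Real.norm_eq_abs, abs_of_nonpos hlog2]
    have : Real.log (x/2) = Real.log x - Real.log 2 := by
      rw [Real.log_div (ne_of_gt hxpos) (by norm_num)]
    linarith

lemma integral_logsin : ∫ x in (0:ℝ)..(π/2), Real.log (Real.sin x) = -(π/2) * Real.log 2 := by
  set J := ∫ x in (0:ℝ)..(π/2), Real.log (Real.sin x) with hJ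
  have hcos_int : IntervalIntegrable (fun x => Real.log (Real.cos x)) volume 0 (π/2) := by
    have := (logsin_intervalIntegrable.comp_sub_left (π/2)).symm
    simpa [Real.sin_pi_div_two_sub] using this
  have hcos : ∫ x in (0:ℝ)..(π/2), Real.log (Real.cos x) = J := by
    have := integral_comp_sub_left (a := 0) (b := π/2)
      (fun x => Real.log (Real.sin x)) (π/2)
    simpa [Real.sin_pi_div_two_sub] using this
  have hint2 : IntervalIntegrable (fun x => Real.log (Real.sin x)) volume (π/2) π := by
    have := (logsin_intervalIntegrable.comp_sub_left π).symm
    simpa [Real.sin_pi_sub, sub_half] using this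
  have h2 : ∫ x in (π/2)..π, Real.log (Real.sin x) = J := by
    have := integral_comp_sub_left (a := π/2) (b := π)
      (fun x => Real.log (Real.sin x)) π
    simpa [Real.sin_pi_sub, sub_half] using this
  have hsplit : ∫ x in (0:ℝ)..π, Real.log (Real.sin x) = J + J := by
    rw [← integral_add_adjacent_intervals logsin_intervalIntegrable hint2, h2]
  have hsin2 : ∫ x in (0:ℝ)..(π/2), Real.log (Real.sin (2*x)) = J := by
    rw [integral_comp_mul_left (fun x => Real.log (Real.sin x)) two_ne_zero,
      show (2:ℝ)*0 = 0 by ring, show (2:ℝ)*(π/2) = π by ring, hsplit, smul_eq_mul]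
    ring
  have hsin2_int : IntervalIntegrable (fun x => Real.log (Real.sin (2*x))) volume 0 (π/2) := by
    have := (logsin_intervalIntegrable.trans hint2).comp_mul_left (c := 2)
    norm_num at this
    exact this
  have key : J + J = J - (π/2) * Real.log 2 := by
    have e1 : J + J = ∫ x in (0:ℝ)..(π/2),
        (Real.log (Real.sin x) + Real.log (Real.cos x)) := by
      rw [integral_add logsin_intervalIntegrable hcos_int, hcos]
    have e2 : ∫ x in (0:ℝ)..(π/2), (Real.log (Real.sin x) + Real.log (Real.cos x))
        = ∫ x in (0:ℝ)..(π/2), (Real.log (Real.sin (2*x)) - Real.log 2) := by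
      apply intervalIntegral.integral_congr_ae
      have hne : ∀ᵐ x : ℝ, x ≠ π/2 := by
        rw [ae_iff]
        have hset : {x : ℝ | ¬ x ≠ π/2} = {(π/2 : ℝ)} := by ext y; simp
        rw [hset]
        exact measure_singleton _
      filter_upwards [hne] with x hxne hx
      rw [Set.uIoc_of_le Real.pi_div_two_pos.le] at hx
      have hx1 : 0 < x := hx.1
      have hx2 : x < π/2 := lt_of_le_of_ne hx.2 hxne
      have hsin : 0 < Real.sin x := Real.sin_pos_of_pos_of_lt_pi hx1 (by linarith [Real.pi_pos])
      have hcosx : 0 < Real.cos x := Real.cos_pos_of_mem_Ioo ⟨by linarith [Real.pi_pos], hx2⟩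
      rw [Real.sin_two_mul, Real.log_mul (mul_ne_zero two_ne_zero hsin.ne') hcosx.ne',
        Real.log_mul two_ne_zero hsin.ne']
      ring
    have e3 : ∫ x in (0:ℝ)..(π/2), (Real.log (Real.sin (2*x)) - Real.log 2)
        = J - (π/2) * Real.log 2 := by
      rw [integral_sub hsin2_int intervalIntegrable_const, hsin2, intervalIntegral.integral_const]
      simp [smul_eq_mul]
    rw [e1, e2, e3]
  linarith

lemma logcos_intervalIntegrable :
    IntervalIntegrable (fun x => Real.log (Real.cos x)) volume 0 (π/2) := by
  have := (logsin_intervalIntegrable.comp_sub_left (π/2)).symm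
  simpa [Real.sin_pi_div_two_sub] using this

lemma integral_logcos : ∫ x in (0:ℝ)..(π/2), Real.log (Real.cos x) = -(π/2) * Real.log 2 := by
  have := integral_comp_sub_left (a := 0) (b := π/2) (fun x => Real.log (Real.sin x)) (π/2)
  simp only [Real.sin_pi_div_two_sub, sub_zero, sub_self] at this
  rw [this, integral_logsin]

lemma logcos_neg_intervalIntegrable :
    IntervalIntegrable (fun x => Real.log (Real.cos x)) volume (-(π/2)) 0 := by
  have := ((IntervalIntegrable.iff_comp_neg).mp logcos_intervalIntegrable).symm
  simpa [Real.cos_neg] using this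

lemma logcos_full_intervalIntegrable :
    IntervalIntegrable (fun x => Real.log (Real.cos x)) volume (-(π/2)) (π/2) :=
  logcos_neg_intervalIntegrable.trans logcos_intervalIntegrable

lemma integral_logcos_full :
    ∫ x in (-(π/2))..(π/2), Real.log (Real.cos x) = -π * Real.log 2 := by
  have hneg : ∫ x in (-(π/2))..(0:ℝ), Real.log (Real.cos x) = -(π/2) * Real.log 2 := by
    have := integral_comp_neg (a := 0) (b := π/2) (fun x => Real.log (Real.cos x))
    simp only [Real.cos_neg, neg_zero] at this
    rw [← this, integral_logcos]
  rw [← integral_add_adjacent_intervals logcos_neg_intervalIntegrable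
    logcos_intervalIntegrable, hneg, integral_logcos]
  ring

lemma logcos_integrableOn :
    IntegrableOn (fun x => Real.log (Real.cos x)) (Set.Ioo (-(π/2)) (π/2)) volume := by
  have h := (intervalIntegrable_iff_integrableOn_Ioc_of_le
    (by linarith [Real.pi_pos] : -(π/2) ≤ π/2)).mp logcos_full_intervalIntegrable
  exact h.mono_set Set.Ioo_subset_Ioc_self

lemma integral_logcos_Ioo :
    ∫ x in Set.Ioo (-(π/2)) (π/2), Real.log (Real.cos x) = -π * Real.log 2 := by
  rw [← MeasureTheory.integral_Ioc_eq_integral_Ioo,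
    ← intervalIntegral.integral_of_le (by linarith [Real.pi_pos] : -(π/2) ≤ π/2),
    integral_logcos_full]

theorem stmt_4 (l s : ℝ) (hs : 0 < s) :
    -∫ x : ℝ, cauchyPdf l s x * Real.log (cauchyPdf l s x) = Real.log (4 * π * s) := by
  have hπ := Real.pi_pos
  set S : Set ℝ := Set.Ioo (-(π/2)) (π/2) with hS
  set f : ℝ → ℝ := fun θ => l + s * Real.tan θ with hf
  have himg : f '' S = Set.univ := by
    have h1 : f '' S = (fun y => l + s * y) '' (Real.tan '' S) := by
      rw [← Set.image_comp]; rfl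
    rw [h1, hS, Real.image_tan_Ioo]
    ext x
    simp only [Set.image_univ, Set.mem_range, Set.mem_univ, iff_true]
    exact ⟨(x - l)/s, by field_simp; ring⟩
  have hderiv : ∀ θ ∈ S, HasDerivWithinAt f (s / Real.cos θ ^ 2) S θ := by
    intro θ hθ
    have hcos : 0 < Real.cos θ := Real.cos_pos_of_mem_Ioo hθ
    have h := ((Real.hasDerivAt_tan hcos.ne').const_mul s).const_add l
    have : s * (1 / Real.cos θ ^ 2) = s / Real.cos θ ^ 2 := by ring
    rw [this] at h
    exact h.hasDerivWithinAt
  have hinj : Set.InjOn f S := by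
    intro a ha b hb hab
    apply Real.injOn_tan ha hb
    have : s * Real.tan a = s * Real.tan b := by
      have := hab
      simp only [hf] at this
      linarith
    exact mul_left_cancel₀ hs.ne' this
  have hcov := MeasureTheory.integral_image_eq_integral_abs_deriv_smul
      measurableSet_Ioo hderiv hinj (fun x => cauchyPdf l s x * Real.log (cauchyPdf l s x))
  rw [himg] at hcov
  have huniv : ∫ x : ℝ, cauchyPdf l s x * Real.log (cauchyPdf l s x)
      = ∫ x in Set.univ, cauchyPdf l s x * Real.log (cauchyPdf l s x) := by
    rw [MeasureTheory.setIntegral_univ]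
  rw [huniv, hcov]
  have hpt : Set.EqOn
      (fun θ => |s / Real.cos θ ^ 2| •
        (cauchyPdf l s (f θ) * Real.log (cauchyPdf l s (f θ))))
      (fun θ => (2 * Real.log (Real.cos θ) - Real.log (π * s)) / π) S := by
    intro θ hθ
    have hcos : 0 < Real.cos θ := Real.cos_pos_of_mem_Ioo hθ
    have hpdf : cauchyPdf l s (f θ) = Real.cos θ ^ 2 / (π * s) := by
      have h2 : (1 + Real.tan θ ^ 2) = (Real.cos θ ^ 2)⁻¹ := by
        rw [← Real.inv_one_add_tan_sq hcos.ne', inv_inv]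
      show s / (π * (s ^ 2 + (l + s * Real.tan θ - l) ^ 2)) = _
      have h1 : s ^ 2 + (l + s * Real.tan θ - l) ^ 2 = s^2 * (1 + Real.tan θ ^ 2) := by ring
      rw [h1, h2]
      field_simp
    have hlogpdf : Real.log (cauchyPdf l s (f θ))
        = 2 * Real.log (Real.cos θ) - Real.log (π * s) := by
      rw [hpdf, Real.log_div (by positivity) (by positivity), Real.log_pow]
      push_cast; ring
    simp only
    rw [hlogpdf, hpdf, abs_of_pos (by positivity), smul_eq_mul, ← mul_assoc]
    have hab : s / Real.cos θ ^ 2 * (Real.cos θ ^ 2 / (π * s)) = 1/π := by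
      field_simp
    rw [hab]
    ring
  rw [MeasureTheory.setIntegral_congr_fun measurableSet_Ioo hpt]
  have hconst : IntegrableOn (fun _ : ℝ => Real.log (π*s)) S volume := by
    exact MeasureTheory.integrableOn_const (by rw [hS]; exact measure_Ioo_lt_top.ne)
  have hint2 : IntegrableOn (fun θ => 2 * Real.log (Real.cos θ)) S volume := by
    exact logcos_integrableOn.const_mul 2
  have hval : ∫ θ in S, (2 * Real.log (Real.cos θ) - Real.log (π * s)) / π
      = (2 * (-π * Real.log 2) - Real.log (π*s) * π) / π := by
    rw [MeasureTheory.integral_div, MeasureTheory.integral_sub hint2 hconst,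
      MeasureTheory.integral_const_mul, integral_logcos_Ioo, MeasureTheory.setIntegral_const,
      hS, measureReal_def, Real.volume_Ioo, ENNReal.toReal_ofReal (by linarith), smul_eq_mul]
    congr 1
    ring
  rw [hval]
  have hlog4 : Real.log 4 = 2 * Real.log 2 := by
    rw [show (4:ℝ) = 2^2 by norm_num, Real.log_pow]; push_cast; ring
  have e1 : Real.log (4*π*s) = 2*Real.log 2 + Real.log π + Real.log s := by
    rw [Real.log_mul (by positivity) hs.ne', Real.log_mul (by norm_num) hπ.ne', hlog4]
  have e2 : Real.log (π*s) = Real.log π + Real.log s := Real.log_mul hπ.ne' hs.ne'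
  rw [e1, e2]
  field_simp
  ring
end

section
/- The Kullback–Leibler divergence between any two Cauchy densities is symmetric: KL(p_{l₁,s₁} : p_{l₂,s₂}) = KL(p_{l₂,s₂} : p_{l₁,s₁}) for all l₁, l₂ ∈ ℝ and s₁, s₂ > 0. -/
open MeasureTheory Real

noncomputable def cauchyKL (l₁ s₁ l₂ s₂ : ℝ) : ℝ :=
  ∫ x : ℝ, cauchyPdf l₁ s₁ x * Real.log (cauchyPdf l₁ s₁ x / cauchyPdf l₂ s₂ x)

/-- Change of variables under the involution `x ↦ c + R/(x-c)`. -/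
lemma cauchy_inv_subst (c R : ℝ) (hR : 0 < R) (f : ℝ → ℝ) :
    ∫ x, f x = ∫ x, (R / (x - c) ^ 2) * f (c + R / (x - c)) := by
  have hmeas : MeasurableSet ({c}ᶜ : Set ℝ) := (measurableSet_singleton c).compl
  set φ : ℝ → ℝ := fun x => c + R / (x - c) with hφ
  have hinv : ∀ x ∈ ({c}ᶜ : Set ℝ), φ (φ x) = x := by
    intro x hx
    have hx' : x - c ≠ 0 := sub_ne_zero.2 hx
    have h1 : φ x - c = R / (x - c) := by simp [φ]
    have h2 : R / (x - c) ≠ 0 := div_ne_zero hR.ne' hx'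
    simp only [φ] at h1 ⊢
    rw [add_sub_cancel_left, div_div_eq_mul_div, mul_comm, mul_div_assoc,
      div_self hR.ne', mul_one, add_sub_cancel]
  have hmem : ∀ x ∈ ({c}ᶜ : Set ℝ), φ x ∈ ({c}ᶜ : Set ℝ) := by
    intro x hx
    simp only [Set.mem_compl_iff, Set.mem_singleton_iff] at hx ⊢
    have hx' : x - c ≠ 0 := sub_ne_zero.2 hx
    intro h
    have : R / (x - c) = 0 := by
      have := sub_eq_zero.2 h
      simpa [φ] using this
    rcases div_eq_zero_iff.1 this with h' | h'
    · exact hR.ne' h'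
    · exact hx' h'
  have himg : φ '' ({c}ᶜ : Set ℝ) = ({c}ᶜ : Set ℝ) := by
    apply Set.Subset.antisymm
    · rintro _ ⟨y, hy, rfl⟩; exact hmem y hy
    · intro x hx; exact ⟨φ x, hmem x hx, hinv x hx⟩
  have hinj : Set.InjOn φ ({c}ᶜ : Set ℝ) := by
    intro a ha b hb h
    rw [← hinv a ha, ← hinv b hb, h]
  have hder : ∀ x ∈ ({c}ᶜ : Set ℝ), HasDerivWithinAt φ (-(R / (x - c) ^ 2)) ({c}ᶜ : Set ℝ) x := by
    intro x hx
    have hx' : x - c ≠ 0 := sub_ne_zero.2 hx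
    have h1 : HasDerivAt (fun y : ℝ => y - c) 1 x := (hasDerivAt_id x).sub_const c
    have h2 : HasDerivAt (fun y : ℝ => (y - c)⁻¹) (-1 / (x - c) ^ 2) x := by
      simpa [Pi.inv_def] using h1.inv hx'
    have h3 : HasDerivAt φ (R * (-1 / (x - c) ^ 2)) x := by
      have := (h2.const_mul R).const_add c
      simpa [φ, div_eq_mul_inv] using this
    have h4 : HasDerivAt φ (-(R / (x - c) ^ 2)) x := by
      convert h3 using 1; ring
    exact h4.hasDerivWithinAt
  calc ∫ x, f x = ∫ x in ({c}ᶜ : Set ℝ), f x := by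
        rw [MeasureTheory.restrict_compl_singleton]
    _ = ∫ x in φ '' ({c}ᶜ : Set ℝ), f x := by rw [himg]
    _ = ∫ x in ({c}ᶜ : Set ℝ), |(-(R / (x - c) ^ 2))| • f (φ x) :=
        integral_image_eq_integral_abs_deriv_smul hmeas hder hinj f
    _ = ∫ x in ({c}ᶜ : Set ℝ), (R / (x - c) ^ 2) * f (φ x) := by
        apply setIntegral_congr_fun hmeas
        intro x _
        simp only [smul_eq_mul, abs_neg]
        rw [abs_of_nonneg (div_nonneg hR.le (sq_nonneg _))]
    _ = ∫ x, (R / (x - c) ^ 2) * f (c + R / (x - c)) := by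
        rw [MeasureTheory.restrict_compl_singleton]

/-- The key pushforward identity for the Cauchy density under the involution. -/
lemma cauchy_push (l s t c x : ℝ) (hs : 0 < s) (ht : 0 < t) (hx : x ≠ c) :
    (t * ((l - c) ^ 2 + s ^ 2) / s) / (x - c) ^ 2 *
      cauchyPdf l s (c + (t * ((l - c) ^ 2 + s ^ 2) / s) / (x - c))
      = cauchyPdf (c + (l - c) * t / s) t x := by
  have hu : x - c ≠ 0 := sub_ne_zero.2 hx
  have hs' : s ≠ 0 := hs.ne'
  have hπ : (π : ℝ) ≠ 0 := Real.pi_ne_zero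
  set R : ℝ := t * ((l - c) ^ 2 + s ^ 2) / s with hRdef
  have key : s ^ 2 + (c + R / (x - c) - l) ^ 2
      = (s ^ 2 * (x - c) ^ 2 + (R - (l - c) * (x - c)) ^ 2) / (x - c) ^ 2 := by
    field_simp
    ring
  have key2 : t ^ 2 + (x - (c + (l - c) * t / s)) ^ 2
      = (t ^ 2 * s ^ 2 + ((x - c) * s - (l - c) * t) ^ 2) / s ^ 2 := by
    field_simp
    ring
  have hP1 : s ^ 2 * (x - c) ^ 2 + (R - (l - c) * (x - c)) ^ 2 ≠ 0 := by positivity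
  have hP2 : t ^ 2 * s ^ 2 + ((x - c) * s - (l - c) * t) ^ 2 ≠ 0 := by positivity
  rw [cauchyPdf, cauchyPdf, key, key2, hRdef]
  field_simp
  ring

theorem stmt_6 (l₁ l₂ s₁ s₂ : ℝ) (hs₁ : 0 < s₁) (hs₂ : 0 < s₂) :
    cauchyKL l₁ s₁ l₂ s₂ = cauchyKL l₂ s₂ l₁ s₁ := by
  by_cases hss : s₁ = s₂
  · -- equal scales: reflect through (l₁ + l₂)/2
    subst hss
    have hrefl₁ : ∀ x : ℝ, cauchyPdf l₁ s₁ ((l₁ + l₂) - x) = cauchyPdf l₂ s₁ x := by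
      intro x; simp only [cauchyPdf]; ring_nf
    have hrefl₂ : ∀ x : ℝ, cauchyPdf l₂ s₁ ((l₁ + l₂) - x) = cauchyPdf l₁ s₁ x := by
      intro x; simp only [cauchyPdf]; ring_nf
    unfold cauchyKL
    calc (∫ x : ℝ, cauchyPdf l₁ s₁ x * Real.log (cauchyPdf l₁ s₁ x / cauchyPdf l₂ s₁ x))
        = ∫ x : ℝ, cauchyPdf l₁ s₁ ((l₁ + l₂) - x) *
            Real.log (cauchyPdf l₁ s₁ ((l₁ + l₂) - x) / cauchyPdf l₂ s₁ ((l₁ + l₂) - x)) :=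
          (integral_sub_left_eq_self
            (fun x => cauchyPdf l₁ s₁ x * Real.log (cauchyPdf l₁ s₁ x / cauchyPdf l₂ s₁ x))
            volume (l₁ + l₂)).symm
      _ = ∫ x : ℝ, cauchyPdf l₂ s₁ x * Real.log (cauchyPdf l₂ s₁ x / cauchyPdf l₁ s₁ x) := by
          apply integral_congr_ae
          filter_upwards with x
          rw [hrefl₁ x, hrefl₂ x]
  · -- distinct scales: use the Möbius involution
    have hd : s₁ - s₂ ≠ 0 := sub_ne_zero.2 hss
    set c : ℝ := (s₁ * l₂ - s₂ * l₁) / (s₁ - s₂) with hc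
    set R : ℝ := s₂ * ((l₁ - c) ^ 2 + s₁ ^ 2) / s₁ with hRdef
    have hR : 0 < R := by
      apply div_pos _ hs₁
      have : 0 < (l₁ - c) ^ 2 + s₁ ^ 2 := by positivity
      exact mul_pos hs₂ this
    have hl₂ : c + (l₁ - c) * s₂ / s₁ = l₂ := by
      rw [hc]; field_simp; ring
    have hl₁ : c + (l₂ - c) * s₁ / s₂ = l₁ := by
      rw [hc]; field_simp; ring
    have hRswap : s₁ * ((l₂ - c) ^ 2 + s₂ ^ 2) / s₂ = R := by
      rw [hRdef, hc]; field_simp; ring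
    have push₁ : ∀ x : ℝ, x ≠ c →
        R / (x - c) ^ 2 * cauchyPdf l₁ s₁ (c + R / (x - c)) = cauchyPdf l₂ s₂ x := by
      intro x hx
      have := cauchy_push l₁ s₁ s₂ c x hs₁ hs₂ hx
      rw [← hRdef] at this
      rw [this, hl₂]
    have push₂ : ∀ x : ℝ, x ≠ c →
        R / (x - c) ^ 2 * cauchyPdf l₂ s₂ (c + R / (x - c)) = cauchyPdf l₁ s₁ x := by
      intro x hx
      have := cauchy_push l₂ s₂ s₁ c x hs₂ hs₁ hx
      rw [hRswap] at this
      rw [this, hl₁]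
    have hne : ∀ᵐ x : ℝ, x ≠ c := by
      rw [MeasureTheory.ae_iff]
      simp [Real.volume_singleton]
    unfold cauchyKL
    rw [cauchy_inv_subst c R hR
      (fun x => cauchyPdf l₁ s₁ x * Real.log (cauchyPdf l₁ s₁ x / cauchyPdf l₂ s₂ x))]
    apply integral_congr_ae
    filter_upwards [hne] with x hx
    have hJ : R / (x - c) ^ 2 ≠ 0 := by
      have hu : x - c ≠ 0 := sub_ne_zero.2 hx
      positivity
    have hratio : cauchyPdf l₁ s₁ (c + R / (x - c)) / cauchyPdf l₂ s₂ (c + R / (x - c))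
        = cauchyPdf l₂ s₂ x / cauchyPdf l₁ s₁ x := by
      rw [← mul_div_mul_left (cauchyPdf l₁ s₁ (c + R / (x - c)))
        (cauchyPdf l₂ s₂ (c + R / (x - c))) hJ, push₁ x hx, push₂ x hx]
    calc R / (x - c) ^ 2 *
          (cauchyPdf l₁ s₁ (c + R / (x - c)) *
            Real.log (cauchyPdf l₁ s₁ (c + R / (x - c)) / cauchyPdf l₂ s₂ (c + R / (x - c))))
        = (R / (x - c) ^ 2 * cauchyPdf l₁ s₁ (c + R / (x - c))) *
            Real.log (cauchyPdf l₁ s₁ (c + R / (x - c)) / cauchyPdf l₂ s₂ (c + R / (x - c))) := by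
          ring
      _ = cauchyPdf l₂ s₂ x * Real.log (cauchyPdf l₂ s₂ x / cauchyPdf l₁ s₁ x) := by
          rw [push₁ x hx, hratio]
end

section
/- For Cauchy densities with common location l, the KL divergence KL(p_{l,s₁} : p_{l,s₂}) equals 2·ln((s₁+s₂)/(2√(s₁s₂))). -/
open MeasureTheory Real

noncomputable def P (s u : ℝ) : ℝ := s / (π * (s ^ 2 + u ^ 2))

lemma sq_add_pos {s : ℝ} (hs : 0 < s) (u : ℝ) : 0 < s ^ 2 + u ^ 2 := by positivity

lemma P_pos {s : ℝ} (hs : 0 < s) (u : ℝ) : 0 < P s u := by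
  unfold P
  have := Real.pi_pos
  positivity

lemma P_cont {s : ℝ} (hs : 0 < s) : Continuous (P s) := by
  unfold P
  apply continuous_const.div (by continuity)
  intro u
  have := Real.pi_pos
  positivity

lemma integrable_inv_sq_add {a : ℝ} (ha : 0 < a) :
    Integrable fun u : ℝ => (a ^ 2 + u ^ 2)⁻¹ := by
  have h : (fun u : ℝ => (a ^ 2 + u ^ 2)⁻¹)
      = fun u : ℝ => (a ^ 2)⁻¹ * (1 + (u / a) ^ 2)⁻¹ := by
    funext u
    field_simp
  rw [h]
  exact (integrable_inv_one_add_sq.comp_div ha.ne').const_mul _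

lemma integral_inv_sq_add {a : ℝ} (ha : 0 < a) :
    ∫ u : ℝ, (a ^ 2 + u ^ 2)⁻¹ = π / a := by
  have h : (fun u : ℝ => (a ^ 2 + u ^ 2)⁻¹)
      = fun u : ℝ => (a ^ 2)⁻¹ * (1 + (u / a) ^ 2)⁻¹ := by
    funext u
    field_simp
  rw [h, integral_const_mul, Measure.integral_comp_div (fun x : ℝ => (1 + x ^ 2)⁻¹) a,
    integral_univ_inv_one_add_sq, abs_of_pos ha, smul_eq_mul]
  field_simp

lemma P_integrable {s : ℝ} (hs : 0 < s) : Integrable (P s) := by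
  have h : P s = fun u : ℝ => (s / π) * (s ^ 2 + u ^ 2)⁻¹ := by
    funext u
    unfold P
    field_simp
  rw [h]
  exact (integrable_inv_sq_add hs).const_mul _

lemma P_integral {s : ℝ} (hs : 0 < s) : ∫ u : ℝ, P s u = 1 := by
  have h : P s = fun u : ℝ => (s / π) * (s ^ 2 + u ^ 2)⁻¹ := by
    funext u
    unfold P
    field_simp
  rw [h, integral_const_mul, integral_inv_sq_add hs]
  field_simp

lemma hasDerivAt_log_sq_add {t : ℝ} (u : ℝ) (ht : 0 < t) :
    HasDerivAt (fun t : ℝ => Real.log (t ^ 2 + u ^ 2)) (2 * t / (t ^ 2 + u ^ 2)) t := by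
  have h1 : HasDerivAt (fun t : ℝ => t ^ 2 + u ^ 2) (2 * t) t := by
    simpa using ((hasDerivAt_pow 2 t).add_const (u ^ 2))
  exact h1.log (sq_add_pos ht u).ne'

lemma logdiff_le {s t : ℝ} (hs : 0 < s) (ht : 0 < t) (hst : s ≤ t) (u : ℝ) :
    Real.log (t ^ 2 + u ^ 2) - Real.log (s ^ 2 + u ^ 2) ≤ 2 * (Real.log t - Real.log s) := by
  have h1 : Real.log (t ^ 2 + u ^ 2) - Real.log (s ^ 2 + u ^ 2)
      = Real.log ((t ^ 2 + u ^ 2) / (s ^ 2 + u ^ 2)) := by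
    rw [Real.log_div (sq_add_pos ht u).ne' (sq_add_pos hs u).ne']
  have h2 : 2 * (Real.log t - Real.log s) = Real.log (t ^ 2 / s ^ 2) := by
    rw [Real.log_div (by positivity) (by positivity), Real.log_pow, Real.log_pow]
    push_cast; ring
  rw [h1, h2]
  apply Real.log_le_log (by positivity)
  rw [div_le_div_iff₀ (sq_add_pos hs u) (by positivity)]
  nlinarith [mul_le_mul_of_nonneg_left (pow_le_pow_left₀ hs.le hst 2) (sq_nonneg u)]

lemma logdiff_bound {s t : ℝ} (hs : 0 < s) (ht : 0 < t) (u : ℝ) :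
    |Real.log (t ^ 2 + u ^ 2) - Real.log (s ^ 2 + u ^ 2)| ≤ 2 * |Real.log t - Real.log s| := by
  rcases le_total s t with h | h
  · rw [abs_of_nonneg (by
      have := Real.log_le_log (sq_add_pos hs u) (by nlinarith : s ^ 2 + u ^ 2 ≤ t ^ 2 + u ^ 2)
      linarith)]
    calc Real.log (t ^ 2 + u ^ 2) - Real.log (s ^ 2 + u ^ 2)
        ≤ 2 * (Real.log t - Real.log s) := logdiff_le hs ht h u
      _ ≤ 2 * |Real.log t - Real.log s| := by
          have := le_abs_self (Real.log t - Real.log s); linarith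
  · rw [abs_sub_comm, abs_of_nonneg (by
      have := Real.log_le_log (sq_add_pos ht u) (by nlinarith : t ^ 2 + u ^ 2 ≤ s ^ 2 + u ^ 2)
      linarith)]
    calc Real.log (s ^ 2 + u ^ 2) - Real.log (t ^ 2 + u ^ 2)
        ≤ 2 * (Real.log s - Real.log t) := logdiff_le ht hs h u
      _ ≤ 2 * |Real.log t - Real.log s| := by
          have := neg_abs_le (Real.log t - Real.log s); linarith

lemma F_cont {s t : ℝ} (hs : 0 < s) (ht : 0 < t) :
    Continuous fun u : ℝ =>
      P s u * (Real.log (t ^ 2 + u ^ 2) - Real.log (s ^ 2 + u ^ 2)) := by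
  apply (P_cont hs).mul
  apply Continuous.sub
  · exact Continuous.log (by continuity) (fun u => (sq_add_pos ht u).ne')
  · exact Continuous.log (by continuity) (fun u => (sq_add_pos hs u).ne')

lemma F_integrable {s t : ℝ} (hs : 0 < s) (ht : 0 < t) :
    Integrable fun u : ℝ =>
      P s u * (Real.log (t ^ 2 + u ^ 2) - Real.log (s ^ 2 + u ^ 2)) := by
  apply Integrable.mono' (((P_integrable hs).const_mul (2 * |Real.log t - Real.log s|)))
    (F_cont hs ht).aestronglyMeasurable
  filter_upwards with u
  rw [norm_mul, norm_eq_abs, norm_eq_abs, abs_of_pos (P_pos hs u), mul_comm]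
  exact mul_le_mul_of_nonneg_right (logdiff_bound hs ht u) (P_pos hs u).le

lemma integral_Fprime {s t : ℝ} (hs : 0 < s) (ht : 0 < t) (hst : t ≠ s) :
    ∫ u : ℝ, P s u * (2 * t / (t ^ 2 + u ^ 2)) = 2 / (s + t) := by
  have hπ := Real.pi_pos
  have h3 : t ^ 2 - s ^ 2 ≠ 0 := by
    have h : t ^ 2 - s ^ 2 = (t + s) * (t - s) := by ring
    rw [h]
    exact mul_ne_zero (by positivity) (sub_ne_zero.mpr hst)
  have key : ∀ u : ℝ, P s u * (2 * t / (t ^ 2 + u ^ 2)) =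
      (2 * t * s / (π * (t ^ 2 - s ^ 2))) * ((s ^ 2 + u ^ 2)⁻¹ - (t ^ 2 + u ^ 2)⁻¹) := by
    intro u
    have h1 := (sq_add_pos hs u).ne'
    have h2 := (sq_add_pos ht u).ne'
    unfold P
    field_simp
    ring
  simp_rw [key]
  rw [integral_const_mul,
    integral_sub (integrable_inv_sq_add hs) (integrable_inv_sq_add ht),
    integral_inv_sq_add hs, integral_inv_sq_add ht]
  have hst' : s + t ≠ 0 := by positivity
  field_simp
  ring

noncomputable def Hfun (s t : ℝ) : ℝ :=
  ∫ u : ℝ, P s u * (Real.log (t ^ 2 + u ^ 2) - Real.log (s ^ 2 + u ^ 2))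

lemma F_meas {s : ℝ} (hs : 0 < s) (t : ℝ) :
    AEStronglyMeasurable
      (fun u : ℝ => P s u * (Real.log (t ^ 2 + u ^ 2) - Real.log (s ^ 2 + u ^ 2)))
      (volume : Measure ℝ) := by
  apply Measurable.aestronglyMeasurable
  exact (P_cont hs).measurable.mul
    ((Real.measurable_log.comp (by measurability)).sub
      (Real.measurable_log.comp (by measurability)))

lemma H_hasDeriv {s t : ℝ} (hs : 0 < s) (ht : 0 < t) (hst : t ≠ s) :
    HasDerivAt (Hfun s) (2 / (s + t)) t := by
  have main := hasDerivAt_integral_of_dominated_loc_of_deriv_le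
    (μ := (volume : Measure ℝ)) (x₀ := t) (s := Metric.ball t (t / 2))
    (F := fun t u => P s u * (Real.log (t ^ 2 + u ^ 2) - Real.log (s ^ 2 + u ^ 2)))
    (F' := fun t u => P s u * (2 * t / (t ^ 2 + u ^ 2)))
    (bound := fun u => P s u * (4 / t))
    (Metric.ball_mem_nhds t (by positivity))
    (Filter.Eventually.of_forall fun t' => F_meas hs t')
    (F_integrable hs ht)
    (((P_cont hs).mul (by
        apply Continuous.div continuous_const (by continuity)
        intro u; exact (sq_add_pos ht u).ne')).aestronglyMeasurable)
    (by
      filter_upwards with u t' ht'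
      rw [Metric.mem_ball, Real.dist_eq] at ht'
      have ht2 : t / 2 < t' := by
        cases abs_lt.mp ht' with
        | intro h1 h2 => linarith
      have ht'pos : 0 < t' := by linarith
      rw [norm_mul, Real.norm_eq_abs, Real.norm_eq_abs, abs_of_pos (P_pos hs u),
        abs_of_pos (by positivity : (0:ℝ) < 2 * t' / (t' ^ 2 + u ^ 2))]
      apply mul_le_mul_of_nonneg_left _ (P_pos hs u).le
      have step1 : 2 * t' / (t' ^ 2 + u ^ 2) ≤ 2 / t' := by
        rw [div_le_div_iff₀ (sq_add_pos ht'pos u) ht'pos]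
        nlinarith [sq_nonneg u]
      have step2 : 2 / t' ≤ 4 / t := by
        rw [div_le_div_iff₀ ht'pos ht]
        nlinarith
      linarith)
    ((P_integrable hs).mul_const _)
    (by
      filter_upwards with u t' ht'
      rw [Metric.mem_ball, Real.dist_eq] at ht'
      have ht'pos : 0 < t' := by
        cases abs_lt.mp ht' with
        | intro h1 h2 => linarith
      exact ((hasDerivAt_log_sq_add u ht'pos).sub_const _).const_mul _)
  have h2 := main.2
  rw [integral_Fprime hs ht hst] at h2
  exact h2

lemma H_contAt {s t : ℝ} (hs : 0 < s) (ht : 0 < t) : ContinuousAt (Hfun s) t := by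
  set C : ℝ := 2 * (|Real.log (t / 2)| + |Real.log (2 * t)| + |Real.log s|) with hC
  apply MeasureTheory.continuousAt_of_dominated
    (bound := fun u => P s u * C)
    (Filter.Eventually.of_forall fun t' => F_meas hs t')
  · filter_upwards [Metric.ball_mem_nhds t (by positivity : (0:ℝ) < t / 2)] with t' ht'
    rw [Metric.mem_ball, Real.dist_eq] at ht'
    obtain ⟨h1, h2⟩ := abs_lt.mp ht'
    have ht'pos : 0 < t' := by linarith
    filter_upwards with u
    rw [norm_mul, Real.norm_eq_abs, Real.norm_eq_abs, abs_of_pos (P_pos hs u)]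
    apply mul_le_mul_of_nonneg_left _ (P_pos hs u).le
    calc |Real.log (t' ^ 2 + u ^ 2) - Real.log (s ^ 2 + u ^ 2)|
        ≤ 2 * |Real.log t' - Real.log s| := logdiff_bound hs ht'pos u
      _ ≤ C := by
          rw [hC]
          have hb1 : Real.log t' ≤ Real.log (2 * t) :=
            Real.log_le_log ht'pos (by linarith)
          have hb2 : Real.log (t / 2) ≤ Real.log t' :=
            Real.log_le_log (by positivity) (by linarith)
          have h3 : |Real.log t'| ≤ |Real.log (t / 2)| + |Real.log (2 * t)| := by
            rw [abs_le]
            constructor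
            · have := neg_abs_le (Real.log (t / 2))
              have := abs_nonneg (Real.log (2 * t))
              linarith
            · have := le_abs_self (Real.log (2 * t))
              have := abs_nonneg (Real.log (t / 2))
              linarith
          have h4 : |Real.log t' - Real.log s| ≤ |Real.log t'| + |Real.log s| :=
            abs_sub (Real.log t') (Real.log s)
          linarith
  · exact (P_integrable hs).mul_const _
  · filter_upwards with u
    exact (((hasDerivAt_log_sq_add u ht).sub_const _).const_mul _).continuousAt

lemma Hfun_self {s : ℝ} : Hfun s s = 0 := by
  simp [Hfun]

lemma Hfun_eq {s t : ℝ} (hs : 0 < s) (ht : 0 < t) :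
    Hfun s t = 2 * Real.log (s + t) - 2 * Real.log (2 * s) := by
  have hlog : ∀ x : ℝ, 0 < x → HasDerivAt (fun y : ℝ => 2 * Real.log (s + y))
      (2 * (s + x)⁻¹) x := by
    intro x hx
    have h := (((hasDerivAt_id x).const_add s).log
      (by positivity : s + id x ≠ 0)).const_mul 2
    simpa [one_div] using h
  set φ : ℝ → ℝ := fun x => Hfun s x - 2 * Real.log (s + x) with hφ
  have key : ∀ a b : ℝ, 0 < a → a < b → (b ≤ s ∨ s ≤ a) → φ a = φ b := by
    intro a b ha hab hsab
    have hb : 0 < b := lt_trans ha hab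
    have hcont : ContinuousOn φ (Set.Icc a b) := by
      intro x hx
      have hx0 : 0 < x := lt_of_lt_of_le ha hx.1
      exact ((H_contAt hs hx0).sub (hlog x hx0).continuousAt).continuousWithinAt
    have hderiv : ∀ x ∈ Set.Ioo a b, HasDerivAt φ ((fun _ : ℝ => (0:ℝ)) x) x := by
      intro x hx
      have hx0 : 0 < x := lt_trans ha hx.1
      have hxs : x ≠ s := by
        rcases hsab with h | h
        · exact ne_of_lt (lt_of_lt_of_le hx.2 h)
        · exact ne_of_gt (lt_of_le_of_lt h hx.1)
      have := (H_hasDeriv hs hx0 hxs).sub (hlog x hx0)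
      have e : (fun _ : ℝ => (0:ℝ)) x = 2 / (s + x) - 2 * (s + x)⁻¹ := by
        beta_reduce
        ring
      rw [e]
      exact this
    obtain ⟨c, _, hc⟩ := exists_hasDerivAt_eq_slope φ (fun _ => (0:ℝ)) hab hcont hderiv
    have hba : b - a ≠ 0 := sub_ne_zero.mpr (ne_of_gt hab)
    field_simp at hc
    linarith [hc]
  have hφs : φ s = -(2 * Real.log (2 * s)) := by
    rw [hφ]
    simp only [Hfun_self]
    rw [show s + s = 2 * s from by ring]
    ring
  rcases lt_trichotomy t s with h | h | h
  · have := key t s ht h (Or.inl le_rfl)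
    rw [hφs] at this
    rw [hφ] at this
    simp only at this
    linarith
  · rw [h, Hfun_self, show s + s = 2 * s from by ring]
    ring
  · have := key s t hs h (Or.inr le_rfl)
    rw [hφs] at this
    rw [hφ] at this
    simp only at this
    linarith

theorem stmt_8 (l s₁ s₂ : ℝ) (hs₁ : 0 < s₁) (hs₂ : 0 < s₂) :
    ∫ x : ℝ, cauchyPdf l s₁ x * Real.log (cauchyPdf l s₁ x / cauchyPdf l s₂ x) =
      2 * Real.log ((s₁ + s₂) / (2 * Real.sqrt (s₁ * s₂))) := by
  have hπ := Real.pi_pos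
  have h0 : (∫ x : ℝ, cauchyPdf l s₁ x * Real.log (cauchyPdf l s₁ x / cauchyPdf l s₂ x))
      = ∫ u : ℝ, P s₁ u * Real.log (P s₁ u / P s₂ u) := by
    rw [show (fun x : ℝ => cauchyPdf l s₁ x * Real.log (cauchyPdf l s₁ x / cauchyPdf l s₂ x))
      = (fun x : ℝ => (fun u : ℝ => P s₁ u * Real.log (P s₁ u / P s₂ u)) (x - l)) from rfl]
    exact MeasureTheory.integral_sub_right_eq_self (μ := volume)
      (fun u : ℝ => P s₁ u * Real.log (P s₁ u / P s₂ u)) l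
  have hpt : ∀ u : ℝ, P s₁ u * Real.log (P s₁ u / P s₂ u)
      = P s₁ u * (Real.log s₁ - Real.log s₂)
        + P s₁ u * (Real.log (s₂ ^ 2 + u ^ 2) - Real.log (s₁ ^ 2 + u ^ 2)) := by
    intro u
    have h1 := sq_add_pos hs₁ u
    have h2 := sq_add_pos hs₂ u
    have hr : P s₁ u / P s₂ u = (s₁ / s₂) * ((s₂ ^ 2 + u ^ 2) / (s₁ ^ 2 + u ^ 2)) := by
      unfold P
      field_simp
    rw [hr, Real.log_mul (by positivity) (by positivity),
      Real.log_div hs₁.ne' hs₂.ne', Real.log_div h2.ne' h1.ne']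
    ring
  rw [h0]
  simp_rw [hpt]
  rw [integral_add ((P_integrable hs₁).mul_const _) (F_integrable hs₁ hs₂),
    integral_mul_const, P_integral hs₁]
  have hH : (∫ u : ℝ, P s₁ u * (Real.log (s₂ ^ 2 + u ^ 2) - Real.log (s₁ ^ 2 + u ^ 2)))
      = 2 * Real.log (s₁ + s₂) - 2 * Real.log (2 * s₁) := Hfun_eq hs₁ hs₂
  rw [hH]
  have hsqrt : Real.log (Real.sqrt (s₁ * s₂)) = (Real.log s₁ + Real.log s₂) / 2 := by
    rw [Real.log_sqrt (by positivity), Real.log_mul hs₁.ne' hs₂.ne']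
  rw [Real.log_div (by positivity) (by positivity),
    Real.log_mul (by norm_num) (by positivity : Real.sqrt (s₁ * s₂) ≠ 0), hsqrt,
    Real.log_mul (by norm_num) hs₁.ne']
  ring
end

section
/- For Cauchy densities with common scale s, the KL divergence KL(p_{l₁,s} : p_{l₂,s}) equals ln(1 + (l₁−l₂)²/(4s²)). -/
open MeasureTheory Real Filter Set Topology

noncomputable def fKL (s m x : ℝ) : ℝ := Real.log ((s^2 + (x-m)^2) / (s^2 + x^2))

noncomputable def gKL (s m : ℝ) : ℝ := ∫ x : ℝ, cauchyPdf 0 s x * fKL s m x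

lemma q_pos {s : ℝ} (hs : 0 < s) (m x : ℝ) : 0 < s^2 + (x - m)^2 := by positivity

lemma cauchyPdf_pos {s : ℝ} (hs : 0 < s) (l x : ℝ) : 0 < cauchyPdf l s x := by
  unfold cauchyPdf
  have := pi_pos
  positivity

lemma cauchyPdf_integrable {s : ℝ} (hs : 0 < s) : Integrable (cauchyPdf 0 s) := by
  have h1 : Integrable (fun x : ℝ => (1 + (x / s)^2)⁻¹) :=
    integrable_inv_one_add_sq.comp_div hs.ne'
  have h2 := h1.const_mul (1 / (π * s))
  refine h2.congr (Eventually.of_forall fun x => ?_)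
  unfold cauchyPdf
  have hπ := pi_pos
  have h3 : (0:ℝ) < s^2 + (x - 0)^2 := q_pos hs 0 x
  rw [sub_zero] at h3 ⊢
  field_simp

lemma deriv_bound {s : ℝ} (hs : 0 < s) (u : ℝ) : |2 * u / (s^2 + u^2)| ≤ 1 / s := by
  have h1 : (0:ℝ) < s^2 + u^2 := by positivity
  rw [abs_div, abs_of_pos h1, div_le_div_iff₀ h1 hs]
  have h2 : |2 * u| = 2 * |u| := by rw [abs_mul]; simp
  rw [h2]
  nlinarith [sq_nonneg (s - |u|), sq_abs u, abs_nonneg u]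

lemma fKL_bound {s : ℝ} (hs : 0 < s) (m x : ℝ) :
    |fKL s m x| ≤ Real.log (2 + 2 * m^2 / s^2) := by
  have hq0 : (0:ℝ) < s^2 + x^2 := by positivity
  have hqm : (0:ℝ) < s^2 + (x-m)^2 := by positivity
  have hs2 : (0:ℝ) < s^2 := by positivity
  set K : ℝ := 2 + 2 * m^2 / s^2 with hK
  have hKpos : (0:ℝ) < K := by
    have : 0 ≤ 2 * m^2 / s^2 := by positivity
    rw [hK]; linarith
  have hK' : K = (2*s^2 + 2*m^2) / s^2 := by rw [hK]; field_simp
  have hub : s^2 + (x-m)^2 ≤ K * (s^2 + x^2) := by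
    rw [hK', div_mul_eq_mul_div, le_div_iff₀ hs2]
    nlinarith [sq_nonneg (s * (x + m)), sq_nonneg (s^2), sq_nonneg (m*x), sq_nonneg (m*s)]
  have hlb : s^2 + x^2 ≤ K * (s^2 + (x-m)^2) := by
    rw [hK', div_mul_eq_mul_div, le_div_iff₀ hs2]
    nlinarith [sq_nonneg (s * (x - 2*m)), sq_nonneg (s^2), sq_nonneg (m*(x-m)), sq_nonneg (m*s)]
  have hr : (0:ℝ) < (s^2 + (x-m)^2) / (s^2 + x^2) := by positivity
  rw [abs_le]
  constructor
  · have h2 : 1 ≤ K * ((s^2 + (x-m)^2) / (s^2 + x^2)) := by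
      rw [mul_div_assoc', le_div_iff₀ hq0, one_mul]
      exact hlb
    have h3 := Real.log_nonneg h2
    rw [Real.log_mul hKpos.ne' hr.ne'] at h3
    unfold fKL
    linarith
  · have h1 : (s^2 + (x-m)^2) / (s^2 + x^2) ≤ K := by
      rw [div_le_iff₀ hq0]; exact hub
    exact Real.log_le_log hr h1

lemma log_const_nonneg {s : ℝ} (hs : 0 < s) (m : ℝ) :
    0 ≤ Real.log (2 + 2 * m^2 / s^2) := by
  apply Real.log_nonneg
  have : 0 ≤ 2 * m^2 / s^2 := by positivity
  linarith

lemma cauchyPdf_continuous {s : ℝ} (hs : 0 < s) (l : ℝ) : Continuous (cauchyPdf l s) := by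
  unfold cauchyPdf
  apply Continuous.div continuous_const (by fun_prop)
  intro x
  have := q_pos hs l x
  have := pi_pos
  positivity

lemma fKL_continuous {s : ℝ} (hs : 0 < s) (m : ℝ) : Continuous (fKL s m) := by
  unfold fKL
  apply Continuous.log
  · apply Continuous.div (by fun_prop) (by fun_prop)
    intro x
    positivity
  · intro x
    have h1 := q_pos hs m x
    have h2 : (0:ℝ) < s^2 + x^2 := by positivity
    positivity

lemma fKL_integrable {s : ℝ} (hs : 0 < s) (m : ℝ) :
    Integrable (fun x : ℝ => cauchyPdf 0 s x * fKL s m x) := by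
  refine (((cauchyPdf_integrable hs).const_mul (Real.log (2 + 2 * m^2 / s^2))).mono
    (((cauchyPdf_continuous hs 0).mul (fKL_continuous hs m)).aestronglyMeasurable)
    (Eventually.of_forall fun x => ?_))
  have hp := cauchyPdf_pos hs 0 x
  have hb := fKL_bound hs m x
  have hlog := log_const_nonneg hs m
  rw [norm_mul, Real.norm_eq_abs, Real.norm_eq_abs, Real.norm_eq_abs, abs_of_pos hp,
    abs_mul, abs_of_nonneg hlog, abs_of_pos hp, mul_comm (cauchyPdf 0 s x)]
  exact mul_le_mul_of_nonneg_right hb hp.le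

lemma deriv_integrand_bound {s : ℝ} (hs : 0 < s) (m x : ℝ) :
    ‖cauchyPdf 0 s x * (2 * (m - x) / (s^2 + (x - m)^2))‖ ≤ (1/s) * cauchyPdf 0 s x := by
  have hp := cauchyPdf_pos hs 0 x
  have hb := deriv_bound hs (m - x)
  have hx : (x - m)^2 = (m - x)^2 := by ring
  rw [norm_mul, Real.norm_eq_abs, Real.norm_eq_abs, abs_of_pos hp, hx, mul_comm]
  exact mul_le_mul_of_nonneg_right hb hp.le

lemma deriv_integrand_continuous {s : ℝ} (hs : 0 < s) (m : ℝ) :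
    Continuous (fun x : ℝ => cauchyPdf 0 s x * (2 * (m - x) / (s^2 + (x - m)^2))) := by
  apply (cauchyPdf_continuous hs 0).mul
  apply Continuous.div (by fun_prop) (by fun_prop)
  intro x
  have := q_pos hs m x
  positivity

lemma deriv_integrand_integrable {s : ℝ} (hs : 0 < s) (m : ℝ) :
    Integrable (fun x : ℝ => cauchyPdf 0 s x * (2 * (m - x) / (s^2 + (x - m)^2))) := by
  refine ((cauchyPdf_integrable hs).const_mul (1/s)).mono
    (deriv_integrand_continuous hs m).aestronglyMeasurable
    (Eventually.of_forall fun x => ?_)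
  have hp := cauchyPdf_pos hs 0 x
  have h0 : (0:ℝ) < 1/s * cauchyPdf 0 s x := by positivity
  rw [Real.norm_eq_abs (1/s * _), abs_of_pos h0]
  exact deriv_integrand_bound hs m x

lemma tendsto_inv_atBot_zero' : Tendsto (fun x : ℝ => x⁻¹) atBot (𝓝 (0:ℝ)) := by
  have h := (tendsto_inv_atTop_zero (𝕜 := ℝ)).comp tendsto_neg_atBot_atTop
  have h2 := h.neg
  rw [neg_zero] at h2
  refine h2.congr fun x => ?_
  simp only [Function.comp_apply, inv_neg, neg_neg]

lemma ratio_tendsto_one_atTop {s : ℝ} (hs : 0 < s) (m : ℝ) :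
    Tendsto (fun x : ℝ => (s^2 + x^2) / (s^2 + (x - m)^2)) atTop (𝓝 1) := by
  have hφ : ContinuousAt (fun t : ℝ => (1 + s^2 * t^2) / ((1 - m*t)^2 + s^2 * t^2)) 0 := by
    apply ContinuousAt.div (by fun_prop) (by fun_prop)
    norm_num
  have h0 : Tendsto (fun x : ℝ => x⁻¹) atTop (𝓝 (0:ℝ)) := tendsto_inv_atTop_zero
  have h := hφ.tendsto.comp h0
  simp only [Function.comp_def] at h
  norm_num at h
  refine h.congr' ?_
  filter_upwards [eventually_gt_atTop 0] with x hx
  have hx0 : x ≠ 0 := hx.ne'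
  have hd : (0:ℝ) < s^2 + (x-m)^2 := q_pos hs m x
  field_simp
  ring

lemma ratio_tendsto_one_atBot {s : ℝ} (hs : 0 < s) (m : ℝ) :
    Tendsto (fun x : ℝ => (s^2 + x^2) / (s^2 + (x - m)^2)) atBot (𝓝 1) := by
  have hφ : ContinuousAt (fun t : ℝ => (1 + s^2 * t^2) / ((1 - m*t)^2 + s^2 * t^2)) 0 := by
    apply ContinuousAt.div (by fun_prop) (by fun_prop)
    norm_num
  have h := hφ.tendsto.comp tendsto_inv_atBot_zero'
  simp only [Function.comp_def] at h
  norm_num at h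
  refine h.congr' ?_
  filter_upwards [eventually_lt_atBot 0] with x hx
  have hx0 : x ≠ 0 := hx.ne
  have hd : (0:ℝ) < s^2 + (x-m)^2 := q_pos hs m x
  field_simp
  ring

lemma logdiff_tendsto_atTop {s : ℝ} (hs : 0 < s) (m : ℝ) :
    Tendsto (fun x : ℝ => Real.log (s^2 + x^2) - Real.log (s^2 + (x-m)^2)) atTop (𝓝 0) := by
  have h1 := (Real.continuousAt_log (by norm_num : (1:ℝ) ≠ 0)).tendsto.comp
    (ratio_tendsto_one_atTop hs m)
  rw [Real.log_one] at h1
  refine h1.congr (fun x => ?_)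
  have ha : (0:ℝ) < s^2 + x^2 := by positivity
  have hb : (0:ℝ) < s^2 + (x-m)^2 := q_pos hs m x
  simp only [Function.comp]
  rw [Real.log_div ha.ne' hb.ne']

lemma logdiff_tendsto_atBot {s : ℝ} (hs : 0 < s) (m : ℝ) :
    Tendsto (fun x : ℝ => Real.log (s^2 + x^2) - Real.log (s^2 + (x-m)^2)) atBot (𝓝 0) := by
  have h1 := (Real.continuousAt_log (by norm_num : (1:ℝ) ≠ 0)).tendsto.comp
    (ratio_tendsto_one_atBot hs m)
  rw [Real.log_one] at h1
  refine h1.congr (fun x => ?_)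
  have ha : (0:ℝ) < s^2 + x^2 := by positivity
  have hb : (0:ℝ) < s^2 + (x-m)^2 := q_pos hs m x
  simp only [Function.comp]
  rw [Real.log_div ha.ne' hb.ne']

lemma arctan_tendsto_atTop {s : ℝ} (hs : 0 < s) (m : ℝ) :
    Tendsto (fun x : ℝ => arctan ((x - m) / s)) atTop (𝓝 (π/2)) := by
  have h1 : Tendsto (fun x : ℝ => (x - m) / s) atTop atTop := by
    apply Tendsto.atTop_div_const hs
    simpa [sub_eq_add_neg] using tendsto_atTop_add_const_right atTop (-m) tendsto_id
  exact (tendsto_arctan_atTop.mono_right nhdsWithin_le_nhds).comp h1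

lemma arctan_tendsto_atBot {s : ℝ} (hs : 0 < s) (m : ℝ) :
    Tendsto (fun x : ℝ => arctan ((x - m) / s)) atBot (𝓝 (-(π/2))) := by
  have h1 : Tendsto (fun x : ℝ => (x - m) / s) atBot atBot := by
    apply Tendsto.atBot_div_const hs
    simpa [sub_eq_add_neg] using tendsto_atBot_add_const_right atBot (-m) tendsto_id
  exact (tendsto_arctan_atBot.mono_right nhdsWithin_le_nhds).comp h1

lemma key_integral {s : ℝ} (hs : 0 < s) (m : ℝ) :
    (∫ x : ℝ, cauchyPdf 0 s x * (2 * (m - x) / (s^2 + (x - m)^2))) = 2*m/(m^2 + 4*s^2) := by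
  rcases eq_or_ne m 0 with rfl | hm
  · rw [mul_zero, zero_div]
    set f := fun x : ℝ => cauchyPdf 0 s x * (2 * (0 - x) / (s^2 + (x - 0)^2)) with hf
    have heq : ∀ x : ℝ, f (-x) = -(f x) := by
      intro x
      rw [hf]
      unfold cauchyPdf
      have h1 : (0:ℝ) < s^2 + x^2 := by positivity
      have hπ := pi_pos
      simp only [sub_zero, zero_sub]
      rw [show (-x:ℝ)^2 = x^2 by ring]
      field_simp
    have h := integral_neg_eq_self f volume
    have h2 : ∫ x : ℝ, f (-x) = ∫ x : ℝ, -(f x) := by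
      congr 1
      funext x
      exact heq x
    rw [h2, integral_neg] at h
    linarith
  · set F := fun x : ℝ => (1/π) * ((s/(m^2+4*s^2)) * (Real.log (s^2+x^2) - Real.log (s^2+(x-m)^2))
       + (2*(m^2+2*s^2)/(m*(m^2+4*s^2))) * arctan (x/s)
       - (4*s^2/(m*(m^2+4*s^2))) * arctan ((x-m)/s)) with hF
    have hπ := pi_pos
    have ha : (0:ℝ) < m^2+4*s^2 := by positivity
    have hderiv : ∀ x : ℝ, HasDerivAt F (cauchyPdf 0 s x * (2 * (m - x) / (s^2 + (x - m)^2))) x := by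
      intro x
      have hq0 : (0:ℝ) < s^2 + x^2 := by positivity
      have hqm : (0:ℝ) < s^2 + (x-m)^2 := by positivity
      have h1 : HasDerivAt (fun x : ℝ => Real.log (s^2+x^2)) (2*x/(s^2+x^2)) x := by
        have hin : HasDerivAt (fun x : ℝ => s^2+x^2) (2*x) x := by
          simpa using ((hasDerivAt_pow 2 x).const_add (s^2))
        simpa using hin.log hq0.ne'
      have h2 : HasDerivAt (fun x : ℝ => Real.log (s^2+(x-m)^2)) (2*(x-m)/(s^2+(x-m)^2)) x := by
        have hin : HasDerivAt (fun x : ℝ => s^2+(x-m)^2) (2*(x-m)) x := by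
          have := (((hasDerivAt_id x).sub_const m).pow 2).const_add (s^2)
          simpa using this
        simpa using hin.log hqm.ne'
      have h3 : HasDerivAt (fun x : ℝ => arctan (x/s)) (1/(1+(x/s)^2) * (1/s)) x := by
        have := (Real.hasDerivAt_arctan (x/s)).comp x ((hasDerivAt_id x).div_const s)
        simpa [Function.comp_def] using this
      have h4 : HasDerivAt (fun x : ℝ => arctan ((x-m)/s)) (1/(1+((x-m)/s)^2) * (1/s)) x := by
        have := (Real.hasDerivAt_arctan ((x-m)/s)).comp x
          (((hasDerivAt_id x).sub_const m).div_const s)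
        simpa [Function.comp_def] using this
      have hD := ((((h1.sub h2).const_mul (s/(m^2+4*s^2))).add
          (h3.const_mul (2*(m^2+2*s^2)/(m*(m^2+4*s^2))))).sub
          (h4.const_mul (4*s^2/(m*(m^2+4*s^2))))).const_mul (1/π)
      rw [hF]
      refine hD.congr_deriv ?_
      unfold cauchyPdf
      rw [sub_zero]
      field_simp
      ring
    have harc1_top : Tendsto (fun x : ℝ => arctan (x/s)) atTop (𝓝 (π/2)) := by
      have := arctan_tendsto_atTop hs 0
      simpa using this
    have harc1_bot : Tendsto (fun x : ℝ => arctan (x/s)) atBot (𝓝 (-(π/2))) := by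
      have := arctan_tendsto_atBot hs 0
      simpa using this
    have htop : Tendsto F atTop (𝓝 (m/(m^2+4*s^2))) := by
      have H := ((((logdiff_tendsto_atTop hs m).const_mul (s/(m^2+4*s^2))).add
          (harc1_top.const_mul (2*(m^2+2*s^2)/(m*(m^2+4*s^2))))).sub
          ((arctan_tendsto_atTop hs m).const_mul (4*s^2/(m*(m^2+4*s^2))))).const_mul (1/π)
      have hval : (1/π) * ((s/(m^2+4*s^2)) * 0 + (2*(m^2+2*s^2)/(m*(m^2+4*s^2))) * (π/2)
          - (4*s^2/(m*(m^2+4*s^2))) * (π/2)) = m/(m^2+4*s^2) := by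
        field_simp
        ring
      rw [hval] at H
      exact H
    have hbot : Tendsto F atBot (𝓝 (-(m/(m^2+4*s^2)))) := by
      have H := ((((logdiff_tendsto_atBot hs m).const_mul (s/(m^2+4*s^2))).add
          (harc1_bot.const_mul (2*(m^2+2*s^2)/(m*(m^2+4*s^2))))).sub
          ((arctan_tendsto_atBot hs m).const_mul (4*s^2/(m*(m^2+4*s^2))))).const_mul (1/π)
      have hval : (1/π) * ((s/(m^2+4*s^2)) * 0 + (2*(m^2+2*s^2)/(m*(m^2+4*s^2))) * (-(π/2))
          - (4*s^2/(m*(m^2+4*s^2))) * (-(π/2))) = -(m/(m^2+4*s^2)) := by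
        field_simp
        ring
      rw [hval] at H
      exact H
    have hres := integral_of_hasDerivAt_of_tendsto hderiv
      (deriv_integrand_integrable hs m) hbot htop
    rw [hres]
    field_simp
    ring

lemma gKL_hasDerivAt {s : ℝ} (hs : 0 < s) (m : ℝ) :
    HasDerivAt (gKL s) (2*m/(m^2+4*s^2)) m := by
  have h_diff : ∀ᵐ x : ℝ, ∀ n ∈ Metric.ball m 1,
      HasDerivAt (fun n => cauchyPdf 0 s x * fKL s n x)
        (cauchyPdf 0 s x * (2 * (n - x) / (s^2 + (x - n)^2))) n := by
    refine Eventually.of_forall fun x n _ => ?_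
    have hq0 : (0:ℝ) < s^2 + x^2 := by positivity
    have hfeq : ∀ t : ℝ, fKL s t x = Real.log (s^2+(x-t)^2) - Real.log (s^2+x^2) := fun t =>
      Real.log_div (q_pos hs t x).ne' hq0.ne'
    have hin : HasDerivAt (fun t : ℝ => s^2+(x-t)^2) (2*(n-x)) n := by
      have := (((hasDerivAt_id n).const_sub x).pow 2).const_add (s^2)
      simpa using this.congr_deriv (by simp only [id_eq]; ring)
    have hlog : HasDerivAt (fun t : ℝ => fKL s t x) (2*(n-x)/(s^2+(x-n)^2)) n := by
      have h1 := (hin.log (q_pos hs n x).ne').sub_const (Real.log (s^2+x^2))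
      refine HasDerivAt.congr_of_eventuallyEq h1 ?_
      exact Eventually.of_forall fun t => (hfeq t)
    exact hlog.const_mul (cauchyPdf 0 s x)
  have key := hasDerivAt_integral_of_dominated_loc_of_deriv_le (μ := volume) (x₀ := m)
    (F := fun n x => cauchyPdf 0 s x * fKL s n x)
    (F' := fun n x => cauchyPdf 0 s x * (2 * (n - x) / (s^2 + (x - n)^2)))
    (bound := fun x => (1/s) * cauchyPdf 0 s x)
    (Metric.ball_mem_nhds m one_pos)
    (Eventually.of_forall fun n =>
      (((cauchyPdf_continuous hs 0).mul (fKL_continuous hs n)).aestronglyMeasurable))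
    (fKL_integrable hs m)
    ((deriv_integrand_continuous hs m).aestronglyMeasurable)
    (Eventually.of_forall fun x n _ => deriv_integrand_bound hs n x)
    ((cauchyPdf_integrable hs).const_mul (1/s))
    h_diff
  have h2 := key.2
  rw [key_integral hs m] at h2
  exact h2

lemma gKL_eq {s : ℝ} (hs : 0 < s) (m : ℝ) :
    gKL s m = Real.log (1 + m^2/(4*s^2)) := by
  have hH : ∀ t : ℝ, HasDerivAt (fun t : ℝ => Real.log (1 + t^2/(4*s^2)))
      (2*t/(t^2+4*s^2)) t := by
    intro t
    have hpos : (0:ℝ) < 1 + t^2/(4*s^2) := by positivity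
    have hin : HasDerivAt (fun t : ℝ => 1 + t^2/(4*s^2)) (2*t/(4*s^2)) t := by
      have := ((hasDerivAt_pow 2 t).div_const (4*s^2)).const_add 1
      simpa using this.congr_deriv (by ring)
    have h1 := hin.log hpos.ne'
    convert h1 using 1
    rw [div_div]
    congr 1
    field_simp
    ring
  have hdiff : Differentiable ℝ (fun t => gKL s t - Real.log (1 + t^2/(4*s^2))) :=
    fun t => ((gKL_hasDerivAt hs t).sub (hH t)).differentiableAt
  have hzero : ∀ t, deriv (fun t => gKL s t - Real.log (1 + t^2/(4*s^2))) t = 0 := by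
    intro t
    rw [show (fun t => gKL s t - Real.log (1 + t^2/(4*s^2))) = gKL s - fun t => Real.log (1 + t^2/(4*s^2)) from rfl,
      ((gKL_hasDerivAt hs t).sub (hH t)).deriv]
    ring
  have hconst := is_const_of_deriv_eq_zero hdiff hzero m 0
  have h0 : gKL s 0 = 0 := by
    unfold gKL
    have hz : (fun x : ℝ => cauchyPdf 0 s x * fKL s 0 x) = fun _ => (0:ℝ) := by
      funext x
      unfold fKL
      have hq0 : (0:ℝ) < s^2 + x^2 := by positivity
      rw [sub_zero, div_self hq0.ne', Real.log_one, mul_zero]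
    rw [hz, integral_zero]
  simp only [h0] at hconst
  norm_num at hconst
  linarith [hconst]

theorem stmt_9 (l₁ l₂ s : ℝ) (hs : 0 < s) :
    ∫ x : ℝ, cauchyPdf l₁ s x * Real.log (cauchyPdf l₁ s x / cauchyPdf l₂ s x) =
      Real.log (1 + (l₁ - l₂) ^ 2 / (4 * s ^ 2)) := by
  have hπ := pi_pos
  have heq : (fun x : ℝ => cauchyPdf l₁ s x * Real.log (cauchyPdf l₁ s x / cauchyPdf l₂ s x))
      = fun x : ℝ => (fun y : ℝ => cauchyPdf 0 s y * fKL s (l₂ - l₁) y) (x - l₁) := by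
    funext x
    simp only
    have hq1 := q_pos hs l₁ x
    have hq2 := q_pos hs l₂ x
    have h1 : cauchyPdf 0 s (x - l₁) = cauchyPdf l₁ s x := by
      unfold cauchyPdf
      rw [sub_zero]
    rw [h1]
    congr 1
    unfold fKL cauchyPdf
    congr 1
    field_simp
    ring
  rw [heq, integral_sub_right_eq_self (fun y : ℝ => cauchyPdf 0 s y * fKL s (l₂ - l₁) y) l₁]
  have h2 : (∫ y : ℝ, cauchyPdf 0 s y * fKL s (l₂ - l₁) y) = gKL s (l₂ - l₁) := rfl
  rw [h2, gKL_eq hs (l₂ - l₁), show (l₂ - l₁)^2 = (l₁ - l₂)^2 by ring]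
end

section
/- The KL divergence between Cauchy densities satisfies the location-scale invariance KL(p_{l₁,s₁} : p_{l₂,s₂}) = KL(p_{0,1} : p_{(l₂−l₁)/s₁, s₂/s₁}) for all l₁, l₂ ∈ ℝ and s₁, s₂ > 0. -/
open MeasureTheory Real

lemma cauchyPdf_scale1 (l₁ s₁ : ℝ) (hs₁ : 0 < s₁) (x : ℝ) :
    cauchyPdf l₁ s₁ x = (1 / s₁) * cauchyPdf 0 1 ((x - l₁) / s₁) := by
  unfold cauchyPdf
  have h : (0:ℝ) < s₁ ^ 2 + (x - l₁) ^ 2 := by positivity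
  field_simp
  ring

lemma cauchyPdf_scale2 (l₁ l₂ s₁ s₂ : ℝ) (hs₁ : 0 < s₁) (hs₂ : 0 < s₂) (x : ℝ) :
    cauchyPdf l₂ s₂ x = (1 / s₁) * cauchyPdf ((l₂ - l₁) / s₁) (s₂ / s₁) ((x - l₁) / s₁) := by
  unfold cauchyPdf
  have h : (0:ℝ) < s₂ ^ 2 + (x - l₂) ^ 2 := by positivity
  field_simp
  ring

theorem stmt_10 (l₁ l₂ s₁ s₂ : ℝ) (hs₁ : 0 < s₁) (hs₂ : 0 < s₂) :
    cauchyKL l₁ s₁ l₂ s₂ = cauchyKL 0 1 ((l₂ - l₁) / s₁) (s₂ / s₁) := by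
  have hs₁' : s₁ ≠ 0 := hs₁.ne'
  set g : ℝ → ℝ := fun y =>
    cauchyPdf 0 1 y * Real.log (cauchyPdf 0 1 y / cauchyPdf ((l₂ - l₁) / s₁) (s₂ / s₁) y)
    with hg
  have key : ∀ x : ℝ,
      cauchyPdf l₁ s₁ x * Real.log (cauchyPdf l₁ s₁ x / cauchyPdf l₂ s₂ x)
        = (1 / s₁) * g ((x - l₁) / s₁) := by
    intro x
    rw [cauchyPdf_scale1 l₁ s₁ hs₁ x, cauchyPdf_scale2 l₁ l₂ s₁ s₂ hs₁ hs₂ x, hg]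
    have h1 : (1 / s₁ : ℝ) ≠ 0 := by positivity
    rw [mul_div_mul_left _ _ h1]
    ring
  unfold cauchyKL
  calc ∫ x : ℝ, cauchyPdf l₁ s₁ x * Real.log (cauchyPdf l₁ s₁ x / cauchyPdf l₂ s₂ x)
      = ∫ x : ℝ, (1 / s₁) * g ((x - l₁) / s₁) := by
        exact integral_congr_ae (Filter.Eventually.of_forall key)
    _ = (1 / s₁) * ∫ x : ℝ, g ((x - l₁) / s₁) := by rw [integral_const_mul]
    _ = (1 / s₁) * ∫ x : ℝ, g (x / s₁) := by
        rw [integral_sub_right_eq_self (fun x => g (x / s₁)) l₁]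
    _ = (1 / s₁) * (|s₁| • ∫ y : ℝ, g y) := by rw [Measure.integral_comp_div g s₁]
    _ = ∫ y : ℝ, g y := by
        rw [abs_of_pos hs₁, smul_eq_mul, ← mul_assoc, one_div, inv_mul_cancel₀ hs₁', one_mul]
end
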